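/- arXiv:2006.08144 — 7 statements merged into one kernel-verified Lean document; each statement's English description precedes it below -/
import Mathlib

section
/- Let u ∈ R^n have strictly positive entries, v ∈ R^n have non-negative entries, and f : [0,∞) → R be convex with f(s) ≥ f(0) for all s ≥ 0. Then ∑_{i=1}^n f(u_i^↓ v_i^↑) ≤ ∑_{i=1}^n f(u_i v_i) ≤ ∑_{i=1}^n f(u_i^↓ v_i^↓). -/
open Equiv Equiv.Perm Finset Function

/-- A convex function on `[0, ∞)` with `f 0 ≤ f s` is monotone. -/
lemma london_mono {f : ℝ → ℝ} (hconv : ConvexOn ℝ (Set.Ici 0) f)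
    (hf0 : ∀ s : ℝ, 0 ≤ s → f 0 ≤ f s) : MonotoneOn f (Set.Ici 0) := by
  intro x hx y hy hxy
  simp only [Set.mem_Ici] at hx hy
  rcases eq_or_lt_of_le hy with hy0 | hy0
  · have hx0 : x = 0 := le_antisymm (hxy.trans hy0.symm.le) hx
    rw [hx0, ← hy0]
  · set t : ℝ := x / y with ht
    have ht0 : 0 ≤ t := div_nonneg hx hy0.le
    have ht1 : t ≤ 1 := by
      rw [ht, div_le_one hy0]; exact hxy
    have hxt : x = t • y + (1 - t) • (0 : ℝ) := by
      simp only [ht, smul_eq_mul, mul_zero, add_zero]; field_simp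
    calc f x = f (t • y + (1 - t) • (0 : ℝ)) := by rw [← hxt]
      _ ≤ t • f y + (1 - t) • f 0 := hconv.2 (Set.mem_Ici.2 hy0.le) (Set.mem_Ici.2 le_rfl)
            ht0 (by linarith) (by ring)
      _ ≤ t • f y + (1 - t) • f y := by
            have := hf0 y hy0.le
            have h1t : (0:ℝ) ≤ 1 - t := by linarith
            simp only [smul_eq_mul]
            nlinarith
      _ = f y := by simp only [smul_eq_mul]; ring

/-- Chord inequality: if `p + q = m + M` with `m ≤ p ≤ M`, then `f p + f q ≤ f m + f M`. -/
lemma london_chord {f : ℝ → ℝ} (hconv : ConvexOn ℝ (Set.Ici 0) f)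
    {m p q M : ℝ} (hm : 0 ≤ m) (hmp : m ≤ p) (hpM : p ≤ M) (hsum : p + q = m + M) :
    f p + f q ≤ f m + f M := by
  rcases eq_or_lt_of_le (hmp.trans hpM) with hmM | hmM
  · have hp : p = m := le_antisymm (hpM.trans hmM.symm.le) hmp
    have hq : q = M := by linarith
    rw [hp, hq]
  · set t : ℝ := (M - p) / (M - m) with ht
    have hMm : 0 < M - m := by linarith
    have ht0 : 0 ≤ t := div_nonneg (by linarith) hMm.le
    have ht1 : t ≤ 1 := by rw [ht, div_le_one hMm]; linarith
    have h1t : (0:ℝ) ≤ 1 - t := by linarith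
    have hMmem : M ∈ Set.Ici (0:ℝ) := Set.mem_Ici.2 (by linarith)
    have hmmem : m ∈ Set.Ici (0:ℝ) := Set.mem_Ici.2 hm
    have hp : p = t • m + (1 - t) • M := by
      simp only [smul_eq_mul, ht]; field_simp; ring
    have hq : q = (1 - t) • m + t • M := by
      simp only [smul_eq_mul, ht]; field_simp; nlinarith
    have h1 : f p ≤ t • f m + (1 - t) • f M := by
      rw [hp]; exact hconv.2 hmmem hMmem ht0 h1t (by ring)
    have h2 : f q ≤ (1 - t) • f m + t • f M := by
      rw [hq]; exact hconv.2 hmmem hMmem h1t ht0 (by ring)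
    simp only [smul_eq_mul] at h1 h2
    nlinarith

/-- The key swap inequality. -/
lemma london_swap {f : ℝ → ℝ} (hconv : ConvexOn ℝ (Set.Ici 0) f)
    (hf0 : ∀ s : ℝ, 0 ≤ s → f 0 ≤ f s) {x1 x2 y1 y2 : ℝ}
    (hx2 : 0 ≤ x2) (hx : x2 ≤ x1) (hy2 : 0 ≤ y2) (hy : y2 ≤ y1) :
    f (x1 * y2) + f (x2 * y1) ≤ f (x1 * y1) + f (x2 * y2) := by
  set m : ℝ := x2 * y2
  set M : ℝ := x1 * y1
  set p : ℝ := x1 * y2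
  set q : ℝ := x2 * y1
  have hm : 0 ≤ m := mul_nonneg hx2 hy2
  have hmp : m ≤ p := mul_le_mul_of_nonneg_right hx hy2
  have hpM : p ≤ M := mul_le_mul_of_nonneg_left hy (hx2.trans hx)
  have hq0 : 0 ≤ q := mul_nonneg hx2 (hy2.trans hy)
  have hqle : q ≤ m + M - p := by
    have h := mul_nonneg (sub_nonneg.2 hx) (sub_nonneg.2 hy)
    simp only [m, M, p, q]
    nlinarith
  have hfq : f q ≤ f (m + M - p) := by
    refine london_mono hconv hf0 (Set.mem_Ici.2 hq0) (Set.mem_Ici.2 (hq0.trans hqle)) hqle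
  have := london_chord hconv hm hmp hpM (show p + (m + M - p) = m + M by ring)
  linarith

/-- Supermodular rearrangement, monovarying case. -/
lemma london_rearr_mono {ι : Type*} [DecidableEq ι] (G : ℝ → ℝ → ℝ) {s : Finset ι}
    {σ : Equiv.Perm ι} {f g : ι → ℝ}
    (H : ∀ i ∈ s, ∀ j ∈ s, ∀ k ∈ s, ∀ l ∈ s, f j ≤ f i → g l ≤ g k →
      G (f i) (g l) + G (f j) (g k) ≤ G (f i) (g k) + G (f j) (g l))
    (hfg : MonovaryOn f g s) (hσ : {x | σ x ≠ x} ⊆ s) :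
    ∑ i ∈ s, G (f i) (g (σ i)) ≤ ∑ i ∈ s, G (f i) (g i) := by
  classical
  revert hσ σ hfg H
  apply Finset.induction_on_max_value (fun i ↦ toLex (g i, f i))
    (motive := fun t ↦ ∀ {σ : Equiv.Perm ι},
      (∀ i ∈ t, ∀ j ∈ t, ∀ k ∈ t, ∀ l ∈ t, f j ≤ f i → g l ≤ g k →
        G (f i) (g l) + G (f j) (g k) ≤ G (f i) (g k) + G (f j) (g l)) →
      MonovaryOn f g t → {x | σ x ≠ x} ⊆ t →
      ∑ i ∈ t, G (f i) (g (σ i)) ≤ ∑ i ∈ t, G (f i) (g i)) s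
  · simp only [le_rfl, Finset.sum_empty, imp_true_iff]
  intro a s has hamax hind σ H hfg hσ
  set τ : Equiv.Perm ι := σ.trans (swap a (σ a)) with hτ
  have hτs : {x | τ x ≠ x} ⊆ s := by
    intro x hx
    simp only [τ, Ne, Set.mem_setOf_eq, Equiv.coe_trans, Equiv.swap_comp_apply] at hx
    split_ifs at hx with h₁ h₂
    · obtain rfl | hax := eq_or_ne x a
      · contradiction
      · exact mem_of_mem_insert_of_ne (hσ fun h ↦ hax <| h.symm.trans h₁) hax
    · exact (hx <| σ.injective h₂.symm).elim
    · exact mem_of_mem_insert_of_ne (hσ hx) (ne_of_apply_ne _ h₂)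
  have Hs : ∀ i ∈ s, ∀ j ∈ s, ∀ k ∈ s, ∀ l ∈ s, f j ≤ f i → g l ≤ g k →
      G (f i) (g l) + G (f j) (g k) ≤ G (f i) (g k) + G (f j) (g l) :=
    fun i hi j hj k hk l hl ↦
      H i (mem_insert_of_mem hi) j (mem_insert_of_mem hj) k (mem_insert_of_mem hk)
        l (mem_insert_of_mem hl)
  specialize hind Hs (hfg.subset <| subset_insert _ _) hτs
  simp_rw [sum_insert has]
  refine le_trans ?_ (add_le_add_right hind _)
  obtain hσa | hσa := eq_or_ne a (σ a)
  · rw [hτ, ← hσa, swap_self, trans_refl]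
  have h1s : σ⁻¹ a ∈ s := by
    rw [Ne, ← inv_eq_iff_eq] at hσa
    refine mem_of_mem_insert_of_ne (hσ fun h ↦ hσa ?_) hσa
    rwa [(show ∀ x, σ (σ⁻¹ x) = x from σ.apply_symm_apply), eq_comm] at h
  have h2s : σ a ∈ s :=
    mem_of_mem_insert_of_ne (hσ <| σ.injective.ne hσa.symm) hσa.symm
  simp only [← s.sum_erase_add _ h1s, add_comm]
  rw [← add_assoc, ← add_assoc]
  simp only [hτ, swap_apply_left, Function.comp_apply, Equiv.coe_trans, (show ∀ x, σ (σ⁻¹ x) = x from σ.apply_symm_apply)]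
  refine add_le_add ?_ (sum_congr rfl fun x hx ↦ ?_).le
  · have hf1 : f (σ⁻¹ a) ≤ f a := by
      specialize hamax (σ⁻¹ a) h1s
      rw [Prod.Lex.le_iff] at hamax
      cases' hamax with hamax hamax
      · exact hfg (mem_insert_of_mem h1s) (mem_insert_self _ _) hamax
      · exact hamax.2
    have hg1 : g (σ a) ≤ g a := by
      specialize hamax (σ a) h2s
      rw [Prod.Lex.le_iff] at hamax
      cases' hamax with hamax hamax
      · exact hamax.le
      · exact hamax.1.le
    have := H a (mem_insert_self _ _) (σ⁻¹ a) (mem_insert_of_mem h1s)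
      a (mem_insert_self _ _) (σ a) (mem_insert_of_mem h2s) hf1 hg1
    linarith
  · rw [mem_erase, Ne, eq_inv_iff_eq] at hx
    rw [swap_apply_of_ne_of_ne hx.1 (σ.injective.ne _)]
    rintro rfl
    exact has hx.2

/-- Supermodular rearrangement, antivarying case. -/
lemma london_rearr_anti {ι : Type*} [DecidableEq ι] (G : ℝ → ℝ → ℝ) {s : Finset ι}
    {σ : Equiv.Perm ι} {f g : ι → ℝ}
    (H : ∀ i ∈ s, ∀ j ∈ s, ∀ k ∈ s, ∀ l ∈ s, f j ≤ f i → g l ≤ g k →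
      G (f i) (g l) + G (f j) (g k) ≤ G (f i) (g k) + G (f j) (g l))
    (hfg : AntivaryOn f g s) (hσ : {x | σ x ≠ x} ⊆ s) :
    ∑ i ∈ s, G (f i) (g i) ≤ ∑ i ∈ s, G (f i) (g (σ i)) := by
  have key := london_rearr_mono (fun x y ↦ -(G x (-y))) (s := s) (σ := σ)
    (f := f) (g := fun i ↦ -(g i)) ?_ ?_ hσ
  · simp only [neg_neg] at key
    have h1 : ∑ i ∈ s, -(G (f i) (g (σ i))) ≤ ∑ i ∈ s, -(G (f i) (g i)) := key
    rw [Finset.sum_neg_distrib, Finset.sum_neg_distrib, neg_le_neg_iff] at h1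
    exact h1
  · intro i hi j hj k hk l hl hf hg
    simp only [neg_neg]
    simp only [neg_le_neg_iff] at hg
    have := H i hi j hj l hl k hk hf hg
    linarith
  · intro i hi j hj hij
    simp only [neg_lt_neg_iff] at hij
    exact hfg hj hi hij

/-- The vector `u` sorted in non-decreasing order. -/
noncomputable def sortAsc {n : ℕ} (u : Fin n → ℝ) : Fin n → ℝ := u ∘ Tuple.sort u

/-- The vector `u` sorted in non-increasing order. -/
noncomputable def sortDesc {n : ℕ} (u : Fin n → ℝ) : Fin n → ℝ := sortAsc u ∘ Fin.rev

/-- London's rearrangement theorem. -/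
theorem london_rearrangement {n : ℕ} (u v : Fin n → ℝ) (hu : ∀ i, 0 < u i)
    (hv : ∀ i, 0 ≤ v i) (f : ℝ → ℝ) (hconv : ConvexOn ℝ (Set.Ici 0) f)
    (hf0 : ∀ s : ℝ, 0 ≤ s → f 0 ≤ f s) :
    ∑ i, f (sortDesc u i * sortAsc v i) ≤ ∑ i, f (u i * v i) ∧
      ∑ i, f (u i * v i) ≤ ∑ i, f (sortDesc u i * sortDesc v i) := by
  classical
  set G : ℝ → ℝ → ℝ := fun x y ↦ f (x * y) with hG
  -- permutations
  set e : Equiv.Perm (Fin n) := Fin.revPerm.trans (Tuple.sort u) with he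
  set πd : Equiv.Perm (Fin n) := Fin.revPerm.trans (Tuple.sort v) with hπd
  set πa : Equiv.Perm (Fin n) := Tuple.sort v with hπa
  have hae : ∀ i, sortDesc u i = u (e i) := fun i ↦ rfl
  have hvd : ∀ i, sortDesc v i = v (πd i) := fun i ↦ rfl
  have hva : ∀ i, sortAsc v i = v (πa i) := fun i ↦ rfl
  -- monotonicity of sorted vectors
  have hrev : Antitone (Fin.rev : Fin n → Fin n) := fun i j hij ↦ Fin.rev_le_rev.2 hij
  have hamono : Antitone (sortDesc u) := (Tuple.monotone_sort u).comp_antitone hrev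
  have hdmono : Antitone (sortDesc v) := (Tuple.monotone_sort v).comp_antitone hrev
  have hcmono : Monotone (sortAsc v) := Tuple.monotone_sort v
  -- positivity facts
  have hau : ∀ i, 0 < sortDesc u i := fun i ↦ hu _
  have hvd0 : ∀ i, 0 ≤ sortDesc v i := fun i ↦ hv _
  have hva0 : ∀ i, 0 ≤ sortAsc v i := fun i ↦ hv _
  -- middle sum rewritten along e
  have hmid : ∑ i, f (u i * v i) = ∑ i, G (sortDesc u i) (v (e i)) := by
    rw [← Equiv.sum_comp e (fun i ↦ f (u i * v i))]
    exact Finset.sum_congr rfl fun i _ ↦ by rw [hG, hae]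
  constructor
  · -- lower bound
    set σa : Equiv.Perm (Fin n) := πa.trans e.symm with hσa
    have hca : ∀ i, sortAsc v (σa⁻¹ i) = v (e i) := by
      intro i
      rw [hva]
      congr 1
      simp [hσa, hπa, Equiv.Perm.inv_def, Equiv.symm_trans_apply, Fin.rev_rev]
    have key := london_rearr_anti G (s := Finset.univ) (σ := σa⁻¹)
      (f := sortDesc u) (g := sortAsc v) ?_ ?_ (by simp)
    · calc ∑ i, f (sortDesc u i * sortAsc v i) = ∑ i, G (sortDesc u i) (sortAsc v i) := rfl
        _ ≤ ∑ i, G (sortDesc u i) (sortAsc v (σa⁻¹ i)) := key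
        _ = ∑ i, f (u i * v i) := by
            rw [hmid]; exact Finset.sum_congr rfl fun i _ ↦ by rw [hca]
    · intro i _ j _ k _ l _ hf hg
      exact london_swap hconv hf0 (hau j).le hf (hva0 l) hg
    · intro i _ j _ hij
      rcases le_or_gt j i with h | h
      · exact absurd (hcmono h) (not_le.2 hij)
      · exact hamono h.le
  · -- upper bound
    set σd : Equiv.Perm (Fin n) := πd.trans e.symm with hσd
    have hcd : ∀ i, sortDesc v (σd⁻¹ i) = v (e i) := by
      intro i
      rw [hvd]
      congr 1
      simp [hσd, hπd, Equiv.Perm.inv_def, Equiv.symm_trans_apply, Fin.rev_rev]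
    have key := london_rearr_mono G (s := Finset.univ) (σ := σd⁻¹)
      (f := sortDesc u) (g := sortDesc v) ?_ ?_ (by simp)
    · calc ∑ i, f (u i * v i) = ∑ i, G (sortDesc u i) (sortDesc v (σd⁻¹ i)) := by
            rw [hmid]; exact Finset.sum_congr rfl fun i _ ↦ by rw [hcd]
        _ ≤ ∑ i, G (sortDesc u i) (sortDesc v i) := key
        _ = ∑ i, f (sortDesc u i * sortDesc v i) := rfl
    · intro i _ j _ k _ l _ hf hg
      exact london_swap hconv hf0 (hau j).le hf (hvd0 l) hg
    · intro i _ j _ hij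
      rcases le_or_gt j i with h | h
      · exact hamono h
      · exact absurd (hdmono h.le) (not_le.2 hij)
end

section
/- Let f : (0,∞) → R be differentiable such that s ↦ s·f'(s) is monotonically increasing on (0,∞). Then for all vectors u, v ∈ R^n with strictly positive entries, ∑_{i=1}^n f(u_i^↑ v_i^↓) ≤ ∑_{i=1}^n f(u_i v_i) ≤ ∑_{i=1}^n f(u_i^↓ v_i^↓). -/
open Equiv Equiv.Perm Finset Function

/-- For a convex function, spreading the arguments apart (keeping the sum) increases the sum of
values. -/
lemma convexOn_slide {G : ℝ → ℝ} (hG : ConvexOn ℝ Set.univ G) {m M x y : ℝ}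
    (hmx : m ≤ x) (hxM : x ≤ M) (hxy : x + y = m + M) :
    G x + G y ≤ G m + G M := by
  rcases eq_or_lt_of_le (hmx.trans hxM) with h | h
  · have hx : x = m := le_antisymm (h ▸ hxM) hmx
    have hy : y = M := by linarith
    rw [hx, hy, add_comm]
  · set s := (x - m) / (M - m) with hs_def
    set t := (M - x) / (M - m) with ht_def
    have hMm : M - m ≠ 0 := by linarith
    have hs : 0 ≤ s := div_nonneg (by linarith) (by linarith)
    have ht : 0 ≤ t := div_nonneg (by linarith) (by linarith)
    have hst : s + t = 1 := by rw [hs_def, ht_def, ← add_div, div_eq_one_iff_eq hMm]; ring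
    have h1 : G x ≤ s * G M + t * G m := by
      have h' := hG.2 (Set.mem_univ M) (Set.mem_univ m) hs ht hst
      have hx' : s • M + t • m = x := by
        simp only [smul_eq_mul, hs_def, ht_def]; field_simp; ring
      rw [hx'] at h'
      simpa using h'
    have h2 : G y ≤ t * G M + s * G m := by
      have hst' : t + s = 1 := by linarith
      have h' := hG.2 (Set.mem_univ M) (Set.mem_univ m) ht hs hst'
      have hy' : t • M + s • m = y := by
        simp only [smul_eq_mul, hs_def, ht_def]; field_simp; nlinarith
      rw [hy'] at h'
      simpa using h'
    calc G x + G y ≤ (s * G M + t * G m) + (t * G M + s * G m) := add_le_add h1 h2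
      _ = (s + t) * G m + (s + t) * G M := by ring
      _ = G m + G M := by rw [hst]; ring

/-- Supermodularity of `(a, c) ↦ G (a + c)` for convex `G`. -/
lemma convexOn_supermodular {G : ℝ → ℝ} (hG : ConvexOn ℝ Set.univ G)
    {a b c d : ℝ} (hba : b ≤ a) (hdc : d ≤ c) :
    G (a + d) + G (b + c) ≤ G (a + c) + G (b + d) := by
  have h := convexOn_slide hG (m := b + d) (M := a + c) (x := a + d) (y := b + c)
    (by linarith) (by linarith) (by ring)
  linarith

/-- Rearrangement inequality for supermodular sums, monovarying case, on a finset. -/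
theorem monovaryOn_sum_supermodular {ι : Type*} {G : ℝ → ℝ}
    (hG : ∀ ⦃a b c d : ℝ⦄, b ≤ a → d ≤ c → G (a + d) + G (b + c) ≤ G (a + c) + G (b + d))
    {s : Finset ι} {σ : Perm ι} {f g : ι → ℝ} (hfg : MonovaryOn f g s)
    (hσ : {x | σ x ≠ x} ⊆ s) :
    ∑ i ∈ s, G (f i + g (σ i)) ≤ ∑ i ∈ s, G (f i + g i) := by
  classical
  revert hσ σ hfg
  apply Finset.induction_on_max_value (fun i ↦ toLex (g i, f i))
    (motive := fun t ↦ ∀ {σ : Perm ι}, MonovaryOn f g t → {x | σ x ≠ x} ⊆ t →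
      ∑ i ∈ t, G (f i + g (σ i)) ≤ ∑ i ∈ t, G (f i + g i)) s
  · simp only [le_rfl, Finset.sum_empty, imp_true_iff]
  intro a s has hamax hind σ hfg hσ
  set τ : Perm ι := σ.trans (swap a (σ a)) with hτ
  have hτs : {x | τ x ≠ x} ⊆ s := by
    intro x hx
    simp only [τ, Ne, Set.mem_setOf_eq, Equiv.coe_trans, Equiv.swap_comp_apply] at hx
    split_ifs at hx with h₁ h₂
    · obtain rfl | hax := eq_or_ne x a
      · contradiction
      · exact mem_of_mem_insert_of_ne (hσ fun h ↦ hax <| h.symm.trans h₁) hax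
    · exact (hx <| σ.injective h₂.symm).elim
    · exact mem_of_mem_insert_of_ne (hσ hx) (ne_of_apply_ne _ h₂)
  specialize hind (hfg.subset <| subset_insert _ _) hτs
  simp_rw [sum_insert has]
  refine le_trans ?_ (add_le_add_right hind _)
  obtain hσa | hσa := eq_or_ne a (σ a)
  · rw [hτ, ← hσa, swap_self, trans_refl]
  have h1s : σ⁻¹ a ∈ s := by
    rw [Ne, ← inv_eq_iff_eq] at hσa
    refine mem_of_mem_insert_of_ne (hσ fun h ↦ hσa ?_) hσa
    rwa [Perm.coe_inv, apply_symm_apply, eq_comm] at h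
  simp only [← s.sum_erase_add _ h1s, add_comm]
  rw [← add_assoc, ← add_assoc]
  simp only [hτ, swap_apply_left, Function.comp_apply, Equiv.coe_trans, (show σ (σ⁻¹ a) = a from σ.apply_symm_apply a)]
  refine add_le_add (hG ?_ ?_) (sum_congr rfl fun x hx ↦ ?_).le
  · specialize hamax (σ⁻¹ a) h1s
    rw [Prod.Lex.le_iff] at hamax
    cases' hamax with hamax hamax
    · exact hfg (mem_insert_of_mem h1s) (mem_insert_self _ _) hamax
    · exact hamax.2
  · specialize hamax (σ a) (mem_of_mem_insert_of_ne (hσ <| σ.injective.ne hσa.symm) hσa.symm)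
    rw [Prod.Lex.le_iff] at hamax
    cases' hamax with hamax hamax
    · exact hamax.le
    · exact hamax.1.le
  · rw [mem_erase, Ne, eq_inv_iff_eq] at hx
    rw [swap_apply_of_ne_of_ne hx.1 (σ.injective.ne _)]
    rintro rfl
    exact has hx.2

/-- Rearrangement inequality for supermodular sums, antivarying case, on a finset. -/
theorem antivaryOn_sum_supermodular {ι : Type*} {G : ℝ → ℝ}
    (hG : ∀ ⦃a b c d : ℝ⦄, b ≤ a → d ≤ c → G (a + d) + G (b + c) ≤ G (a + c) + G (b + d))
    {s : Finset ι} {σ : Perm ι} {f g : ι → ℝ} (hfg : AntivaryOn f g s)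
    (hσ : {x | σ x ≠ x} ⊆ s) :
    ∑ i ∈ s, G (f i + g i) ≤ ∑ i ∈ s, G (f i + g (σ i)) := by
  classical
  revert hσ σ hfg
  apply Finset.induction_on_max_value (fun i ↦ toLex (g i, OrderDual.toDual (f i)))
    (motive := fun t ↦ ∀ {σ : Perm ι}, AntivaryOn f g t → {x | σ x ≠ x} ⊆ t →
      ∑ i ∈ t, G (f i + g i) ≤ ∑ i ∈ t, G (f i + g (σ i))) s
  · simp only [le_rfl, Finset.sum_empty, imp_true_iff]
  intro a s has hamax hind σ hfg hσ
  set τ : Perm ι := σ.trans (swap a (σ a)) with hτ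
  have hτs : {x | τ x ≠ x} ⊆ s := by
    intro x hx
    simp only [τ, Ne, Set.mem_setOf_eq, Equiv.coe_trans, Equiv.swap_comp_apply] at hx
    split_ifs at hx with h₁ h₂
    · obtain rfl | hax := eq_or_ne x a
      · contradiction
      · exact mem_of_mem_insert_of_ne (hσ fun h ↦ hax <| h.symm.trans h₁) hax
    · exact (hx <| σ.injective h₂.symm).elim
    · exact mem_of_mem_insert_of_ne (hσ hx) (ne_of_apply_ne _ h₂)
  specialize hind (hfg.subset <| subset_insert _ _) hτs
  simp_rw [sum_insert has]
  refine le_trans (add_le_add_right hind _) ?_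
  obtain hσa | hσa := eq_or_ne a (σ a)
  · rw [hτ, ← hσa, swap_self, trans_refl]
  have h1s : σ⁻¹ a ∈ s := by
    rw [Ne, ← inv_eq_iff_eq] at hσa
    refine mem_of_mem_insert_of_ne (hσ fun h ↦ hσa ?_) hσa
    rwa [Perm.coe_inv, apply_symm_apply, eq_comm] at h
  simp only [← s.sum_erase_add _ h1s, add_comm]
  rw [← add_assoc, ← add_assoc]
  simp only [hτ, swap_apply_left, Function.comp_apply, Equiv.coe_trans, (show σ (σ⁻¹ a) = a from σ.apply_symm_apply a)]
  have hba : f a ≤ f (σ⁻¹ a) := by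
    specialize hamax (σ⁻¹ a) h1s
    rw [Prod.Lex.le_iff] at hamax
    cases' hamax with hamax hamax
    · exact hfg (mem_insert_of_mem h1s) (mem_insert_self _ _) hamax
    · exact hamax.2
  have hdc : g (σ a) ≤ g a := by
    specialize hamax (σ a) (mem_of_mem_insert_of_ne (hσ <| σ.injective.ne hσa.symm) hσa.symm)
    rw [Prod.Lex.le_iff] at hamax
    cases' hamax with hamax hamax
    · exact hamax.le
    · exact hamax.1.le
  have key := hG hba hdc
  refine add_le_add (by linarith) (sum_congr rfl fun x hx ↦ ?_).le
  · rw [mem_erase, Ne, eq_inv_iff_eq] at hx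
    rw [swap_apply_of_ne_of_ne hx.1 (σ.injective.ne _)]
    rintro rfl
    exact has hx.2

/-- Vector rearrangement inequality for `f` with `s ↦ s * f' s` increasing. -/
theorem vector_rearrangement_increasing {n : ℕ} (f f' : ℝ → ℝ)
    (hderiv : ∀ s ∈ Set.Ioi (0 : ℝ), HasDerivAt f (f' s) s)
    (hmono : MonotoneOn (fun s => s * f' s) (Set.Ioi 0))
    (u v : Fin n → ℝ) (hu : ∀ i, 0 < u i) (hv : ∀ i, 0 < v i) :
    ∑ i, f (sortAsc u i * sortDesc v i) ≤ ∑ i, f (u i * v i) ∧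
      ∑ i, f (u i * v i) ≤ ∑ i, f (sortDesc u i * sortDesc v i) := by
  classical
  set G : ℝ → ℝ := fun t => f (Real.exp t) with hG_def
  have hG' : ∀ t : ℝ, HasDerivAt G (Real.exp t * f' (Real.exp t)) t := by
    intro t
    have h1 := (hderiv _ (Set.mem_Ioi.2 (Real.exp_pos t))).comp t (Real.hasDerivAt_exp t)
    simpa [hG_def, mul_comm, Function.comp_def] using h1
  have hGdiff : Differentiable ℝ G := fun t => (hG' t).differentiableAt
  have hmonoG : Monotone (deriv G) := by
    intro x y hxy
    rw [(hG' x).deriv, (hG' y).deriv]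
    exact hmono (Set.mem_Ioi.2 (Real.exp_pos x)) (Set.mem_Ioi.2 (Real.exp_pos y))
      (Real.exp_le_exp.2 hxy)
  have hconv : ConvexOn ℝ Set.univ G := hmonoG.convexOn_univ_of_deriv hGdiff
  have hGsup : ∀ ⦃a b c d : ℝ⦄, b ≤ a → d ≤ c →
      G (a + d) + G (b + c) ≤ G (a + c) + G (b + d) :=
    fun a b c d hba hdc => convexOn_supermodular hconv hba hdc
  -- positivity of sorted vectors
  have huA : ∀ i, 0 < sortAsc u i := fun i => hu _
  have huD : ∀ i, 0 < sortDesc u i := fun i => hu _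
  have hvD : ∀ i, 0 < sortDesc v i := fun i => hv _
  -- G of sums of logs
  have hGlog : ∀ x y : ℝ, 0 < x → 0 < y → G (Real.log x + Real.log y) = f (x * y) := by
    intro x y hx hy
    rw [hG_def]
    simp only
    rw [Real.exp_add, Real.exp_log hx, Real.exp_log hy]
  -- monotonicity of sorted vectors
  have hAu : Monotone (sortAsc u) := Tuple.monotone_sort u
  have hAv : Monotone (sortAsc v) := Tuple.monotone_sort v
  have hDu : Antitone (sortDesc u) := fun i j h => hAu (Fin.rev_le_rev.2 h)
  have hDv : Antitone (sortDesc v) := fun i j h => hAv (Fin.rev_le_rev.2 h)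
  -- log-compositions
  set Lx : Fin n → ℝ := fun i => Real.log (sortDesc u i) with hLx
  set La : Fin n → ℝ := fun i => Real.log (sortAsc u i) with hLa
  set Ly : Fin n → ℝ := fun i => Real.log (sortDesc v i) with hLy
  have hLxA : Antitone Lx := fun i j h =>
    (Real.log_le_log_iff (huD j) (huD i)).2 (hDu h)
  have hLaM : Monotone La := fun i j h =>
    (Real.log_le_log_iff (huA i) (huA j)).2 (hAu h)
  have hLyA : Antitone Ly := fun i j h =>
    (Real.log_le_log_iff (hvD j) (hvD i)).2 (hDv h)
  -- permutations
  set σu : Perm (Fin n) := Tuple.sort u with hσu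
  set σv : Perm (Fin n) := Tuple.sort v with hσv
  set eu : Perm (Fin n) := Fin.revPerm.trans σu with heu
  set ev : Perm (Fin n) := Fin.revPerm.trans σv with hev
  have hsortDu : ∀ i, sortDesc u i = u (eu i) := fun i => rfl
  have hsortDv : ∀ i, sortDesc v i = v (ev i) := fun i => rfl
  have hsortAu : ∀ i, sortAsc u i = u (σu i) := fun i => rfl
  constructor
  · -- lower bound: antivary case
    set σ₁ : Perm (Fin n) := σu.trans ev.symm with hσ₁
    have hanti : AntivaryOn La Ly (Finset.univ : Finset (Fin n)) :=
      (hLaM.antivary hLyA).antivaryOn _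
    have key := antivaryOn_sum_supermodular hGsup (σ := σ₁) hanti
      (fun x _ => Finset.mem_coe.2 (Finset.mem_univ x))
    have hL : ∑ i ∈ Finset.univ, G (La i + Ly i) = ∑ i, f (sortAsc u i * sortDesc v i) :=
      Finset.sum_congr rfl fun i _ => hGlog _ _ (huA i) (hvD i)
    have hR : ∑ i ∈ Finset.univ, G (La i + Ly (σ₁ i)) = ∑ i, f (u i * v i) := by
      have step : ∀ i, G (La i + Ly (σ₁ i)) = f (u (σu i) * v (σu i)) := by
        intro i
        have h1 : Ly (σ₁ i) = Real.log (v (σu i)) := by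
          rw [hLy]
          simp only
          rw [hsortDv]
          congr 1
          simp [hσ₁]
        rw [h1, hLa]
        simp only
        rw [hsortAu]
        exact hGlog _ _ (hu _) (hv _)
      rw [Finset.sum_congr rfl fun i _ => step i]
      exact Equiv.sum_comp σu (fun i => f (u i * v i))
    rw [hL, hR] at key
    exact key
  · -- upper bound: monovary case
    set σ₂ : Perm (Fin n) := eu.trans ev.symm with hσ₂
    have hmonov : MonovaryOn Lx Ly (Finset.univ : Finset (Fin n)) :=
      (hLxA.monovary hLyA).monovaryOn _
    have key := monovaryOn_sum_supermodular hGsup (σ := σ₂) hmonov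
      (fun x _ => Finset.mem_coe.2 (Finset.mem_univ x))
    have hR : ∑ i ∈ Finset.univ, G (Lx i + Ly i) = ∑ i, f (sortDesc u i * sortDesc v i) :=
      Finset.sum_congr rfl fun i _ => hGlog _ _ (huD i) (hvD i)
    have hL : ∑ i ∈ Finset.univ, G (Lx i + Ly (σ₂ i)) = ∑ i, f (u i * v i) := by
      have step : ∀ i, G (Lx i + Ly (σ₂ i)) = f (u (eu i) * v (eu i)) := by
        intro i
        have h1 : Ly (σ₂ i) = Real.log (v (eu i)) := by
          rw [hLy]
          simp only
          rw [hsortDv]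
          congr 1
          simp [hσ₂]
        rw [h1, hLx]
        simp only
        rw [hsortDu]
        exact hGlog _ _ (hu _) (hv _)
      rw [Finset.sum_congr rfl fun i _ => step i]
      exact Equiv.sum_comp eu (fun i => f (u i * v i))
    rw [hL, hR] at key
    exact key
end

section
/- Let f : (0,∞) → R be differentiable such that s ↦ s·f'(s) is monotonically decreasing on (0,∞). Then for all vectors u, v ∈ R^n with strictly positive entries, ∑_{i=1}^n f(u_i^↑ v_i^↓) ≥ ∑_{i=1}^n f(u_i v_i) ≥ ∑_{i=1}^n f(u_i^↓ v_i^↓). -/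
lemma swap_key (f f' : ℝ → ℝ)
    (hderiv : ∀ s ∈ Set.Ioi (0 : ℝ), HasDerivAt f (f' s) s)
    (hmono : AntitoneOn (fun s => s * f' s) (Set.Ioi 0))
    {a a' b b' : ℝ} (ha : 0 < a) (hb : 0 < b) (haa : a ≤ a') (hbb : b ≤ b') :
    f (a * b) + f (a' * b') ≤ f (a * b') + f (a' * b) := by
  have hb' : 0 < b' := hb.trans_le hbb
  set h : ℝ → ℝ := fun t => f (t * b') - f (t * b) with hh
  have hd : ∀ t ∈ Set.Ioi (0 : ℝ), HasDerivAt h (f' (t * b') * b' - f' (t * b) * b) t := by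
    intro t ht
    have h1 : HasDerivAt (fun t => f (t * b')) (f' (t * b') * b') t :=
      (hderiv (t * b') (by exact mul_pos ht hb')).comp t (hasDerivAt_mul_const b')
    have h2 : HasDerivAt (fun t => f (t * b)) (f' (t * b) * b) t :=
      (hderiv (t * b) (by exact mul_pos ht hb)).comp t (hasDerivAt_mul_const b)
    exact h1.sub h2
  have hIcc : Set.Icc a a' ⊆ Set.Ioi (0 : ℝ) := fun t htt => lt_of_lt_of_le ha htt.1
  have hanti : AntitoneOn h (Set.Icc a a') := by
    apply antitoneOn_of_deriv_nonpos (convex_Icc a a')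
    · exact fun t ht => ((hd t (hIcc ht)).continuousAt).continuousWithinAt
    · intro t ht
      rw [interior_Icc] at ht
      exact ((hd t (hIcc (Set.Ioo_subset_Icc_self ht))).differentiableAt).differentiableWithinAt
    · intro t ht
      rw [interior_Icc] at ht
      have ht0 : (0:ℝ) < t := hIcc (Set.Ioo_subset_Icc_self ht)
      rw [(hd t ht0).deriv]
      have hm := hmono (Set.mem_Ioi.2 (mul_pos ht0 hb)) (Set.mem_Ioi.2 (mul_pos ht0 hb'))
        (mul_le_mul_of_nonneg_left hbb ht0.le)
      simp only at hm
      nlinarith [hm, ht0]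
  have := hanti (Set.left_mem_Icc.2 haa)
    (Set.right_mem_Icc.2 haa) haa
  simp only [hh] at this
  linarith


lemma sum_pair_decomp {M : Type*} [AddCommMonoid M] {n : ℕ} {i j : Fin n} (hij : i ≠ j)
    (F : Fin n → M) :
    ∑ k, F k = F i + F j + ∑ k ∈ (Finset.univ.erase i).erase j, F k := by
  rw [← Finset.add_sum_erase _ F (Finset.mem_univ i),
    ← Finset.add_sum_erase _ F (Finset.mem_erase.2 ⟨hij.symm, Finset.mem_univ j⟩), add_assoc]

lemma perm_eq_id_of_strictMono {n : ℕ} (π : Equiv.Perm (Fin n)) (h : StrictMono (π : Fin n → Fin n)) :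
    ∀ k, π k = k := by
  have hwf : WellFoundedLT (Fin n) := Finite.to_wellFoundedLT
  have hsymm : StrictMono (π.symm : Fin n → Fin n) := by
    intro a b hab
    have := h.lt_iff_lt (a := π.symm a) (b := π.symm b)
    simpa using this.1 (by simpa using hab)
  intro k
  have h1 : k ≤ π k := h.le_apply
  have h2 : π k ≤ π.symm (π k) := hsymm.le_apply
  rw [Equiv.symm_apply_apply] at h2
  exact le_antisymm h2 h1

lemma rearr_max {n : ℕ} (f : ℝ → ℝ)
    (key : ∀ {a a' b b' : ℝ}, 0 < a → 0 < b → a ≤ a' → b ≤ b' →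
      f (a * b) + f (a' * b') ≤ f (a * b') + f (a' * b))
    (A B : Fin n → ℝ) (hA : Monotone A) (hB : Monotone B)
    (hA0 : ∀ i, 0 < A i) (hB0 : ∀ i, 0 < B i) (π : Equiv.Perm (Fin n)) :
    ∑ i, f (A i * B (π i)) ≤ ∑ i, f (A i * B i.rev) := by
  suffices H : ∀ N (π : Equiv.Perm (Fin n)), (∑ k, (π k : ℕ) * (k : ℕ)) < N →
      ∑ i, f (A i * B (π i)) ≤ ∑ i, f (A i * B i.rev) from
    H _ π (Nat.lt_succ_self _)
  intro N
  induction N with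
  | zero => exact fun π h => absurd h (Nat.not_lt_zero _)
  | succ N IH =>
    intro π hπ
    by_cases hex : ∃ p : Fin n × Fin n, p.1 < p.2 ∧ π p.1 < π p.2
    · obtain ⟨⟨i, j⟩, hij, hπij⟩ := hex
      set π' : Equiv.Perm (Fin n) := π * Equiv.swap i j with hπ'def
      have hne : i ≠ j := ne_of_lt hij
      have e1 : π' i = π j := by simp [hπ'def, Equiv.swap_apply_left]
      have e2 : π' j = π i := by simp [hπ'def, Equiv.swap_apply_right]
      have erest : ∀ k, k ≠ j → k ≠ i → π' k = π k := by
        intro k h1 h2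
        simp [hπ'def, Equiv.swap_apply_of_ne_of_ne h2 h1]
      have hrest : ∀ (G : Fin n → ℝ),
          ∑ k ∈ (Finset.univ.erase i).erase j, G (π' k) = ∑ k ∈ (Finset.univ.erase i).erase j, G (π k) := by
        intro G
        refine Finset.sum_congr rfl fun k hk => ?_
        rw [Finset.mem_erase, Finset.mem_erase] at hk
        rw [erest k hk.1 hk.2.1]
      have hrestN : ∑ k ∈ (Finset.univ.erase i).erase j, (π' k : ℕ) * (k : ℕ)
          = ∑ k ∈ (Finset.univ.erase i).erase j, (π k : ℕ) * (k : ℕ) := by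
        refine Finset.sum_congr rfl fun k hk => ?_
        rw [Finset.mem_erase, Finset.mem_erase] at hk
        rw [erest k hk.1 hk.2.1]
      have measure_lt : (∑ k, (π' k : ℕ) * (k : ℕ)) < ∑ k, (π k : ℕ) * (k : ℕ) := by
        rw [sum_pair_decomp hne (fun k => (π' k : ℕ) * (k : ℕ)),
          sum_pair_decomp hne (fun k => (π k : ℕ) * (k : ℕ))]
        simp only [e1, e2, hrestN]
        have h1 : (π i : ℕ) < (π j : ℕ) := hπij
        have h2 : (i : ℕ) < (j : ℕ) := hij
        have := mul_add_mul_lt_mul_add_mul h1 h2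
        omega
      have hrestF : ∑ k ∈ (Finset.univ.erase i).erase j, f (A k * B (π' k))
          = ∑ k ∈ (Finset.univ.erase i).erase j, f (A k * B (π k)) := by
        refine Finset.sum_congr rfl fun k hk => ?_
        rw [Finset.mem_erase, Finset.mem_erase] at hk
        rw [erest k hk.1 hk.2.1]
      have sum_le : ∑ k, f (A k * B (π k)) ≤ ∑ k, f (A k * B (π' k)) := by
        rw [sum_pair_decomp hne (fun k => f (A k * B (π k))),
          sum_pair_decomp hne (fun k => f (A k * B (π' k))), e1, e2, hrestF]
        exact add_le_add (key (hA0 i) (hB0 (π i)) (hA hij.le) (hB (le_of_lt hπij))) le_rfl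
      exact sum_le.trans (IH π' (by omega))
    · push_neg at hex
      have hanti : StrictAnti π := by
        intro i j hij
        exact lt_of_le_of_ne (hex (i, j) hij) (fun h => absurd (π.injective h) (ne_of_lt hij).symm)
      have hmono2 : StrictMono (fun k => (π k).rev) := fun i j h =>
        Fin.rev_lt_rev.2 (hanti h)
      have heq : ∀ k, π k = k.rev := by
        have := perm_eq_id_of_strictMono (π.trans (Equiv.refl _) |>.trans Fin.revPerm)
          (by intro i j h; exact hmono2 h)
        intro k
        have hk := this k
        simp only [Equiv.trans_apply, Equiv.refl_apply, Fin.revPerm_apply] at hk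
        rw [← Fin.rev_rev (π k), hk]
      exact le_of_eq (Finset.sum_congr rfl fun k _ => by rw [heq k])


lemma rearr_min {n : ℕ} (f : ℝ → ℝ)
    (key : ∀ {a a' b b' : ℝ}, 0 < a → 0 < b → a ≤ a' → b ≤ b' →
      f (a * b) + f (a' * b') ≤ f (a * b') + f (a' * b))
    (A B : Fin n → ℝ) (hA : Monotone A) (hB : Monotone B)
    (hA0 : ∀ i, 0 < A i) (hB0 : ∀ i, 0 < B i) (π : Equiv.Perm (Fin n)) :
    ∑ i, f (A i * B i) ≤ ∑ i, f (A i * B (π i)) := by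
  suffices H : ∀ N (π : Equiv.Perm (Fin n)), (∑ k, (π k : ℕ) * ((k.rev : Fin n) : ℕ)) < N →
      ∑ i, f (A i * B i) ≤ ∑ i, f (A i * B (π i)) from
    H _ π (Nat.lt_succ_self _)
  intro N
  induction N with
  | zero => exact fun π h => absurd h (Nat.not_lt_zero _)
  | succ N IH =>
    intro π hπ
    by_cases hex : ∃ p : Fin n × Fin n, p.1 < p.2 ∧ π p.2 < π p.1
    · obtain ⟨⟨i, j⟩, hij, hπij⟩ := hex
      set π' : Equiv.Perm (Fin n) := π * Equiv.swap i j with hπ'def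
      have hne : i ≠ j := ne_of_lt hij
      have e1 : π' i = π j := by simp [hπ'def, Equiv.swap_apply_left]
      have e2 : π' j = π i := by simp [hπ'def, Equiv.swap_apply_right]
      have erest : ∀ k, k ≠ j → k ≠ i → π' k = π k := by
        intro k h1 h2
        simp [hπ'def, Equiv.swap_apply_of_ne_of_ne h2 h1]
      have hrestN : ∑ k ∈ (Finset.univ.erase i).erase j, (π' k : ℕ) * ((k.rev : Fin n) : ℕ)
          = ∑ k ∈ (Finset.univ.erase i).erase j, (π k : ℕ) * ((k.rev : Fin n) : ℕ) := by
        refine Finset.sum_congr rfl fun k hk => ?_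
        rw [Finset.mem_erase, Finset.mem_erase] at hk
        rw [erest k hk.1 hk.2.1]
      have measure_lt : (∑ k, (π' k : ℕ) * ((k.rev : Fin n) : ℕ))
          < ∑ k, (π k : ℕ) * ((k.rev : Fin n) : ℕ) := by
        rw [sum_pair_decomp hne (fun k => (π' k : ℕ) * ((k.rev : Fin n) : ℕ)),
          sum_pair_decomp hne (fun k => (π k : ℕ) * ((k.rev : Fin n) : ℕ))]
        simp only [e1, e2, hrestN]
        have h1 : (π j : ℕ) < (π i : ℕ) := hπij
        have h2 : ((j.rev : Fin n) : ℕ) < ((i.rev : Fin n) : ℕ) := Fin.rev_lt_rev.2 hij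
        have := mul_add_mul_lt_mul_add_mul h1 h2
        omega
      have hrestF : ∑ k ∈ (Finset.univ.erase i).erase j, f (A k * B (π' k))
          = ∑ k ∈ (Finset.univ.erase i).erase j, f (A k * B (π k)) := by
        refine Finset.sum_congr rfl fun k hk => ?_
        rw [Finset.mem_erase, Finset.mem_erase] at hk
        rw [erest k hk.1 hk.2.1]
      have sum_le : ∑ k, f (A k * B (π' k)) ≤ ∑ k, f (A k * B (π k)) := by
        rw [sum_pair_decomp hne (fun k => f (A k * B (π k))),
          sum_pair_decomp hne (fun k => f (A k * B (π' k))), e1, e2, hrestF]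
        exact add_le_add (key (hA0 i) (hB0 (π j)) (hA hij.le) (hB (le_of_lt hπij))) le_rfl
      exact (IH π' (by omega)).trans sum_le
    · push_neg at hex
      have hmono2 : StrictMono (π : Fin n → Fin n) := by
        intro i j hij
        exact lt_of_le_of_ne (hex (i, j) hij) (fun h => absurd (π.injective h) (ne_of_lt hij))
      exact le_of_eq (Finset.sum_congr rfl fun k _ => by
        rw [perm_eq_id_of_strictMono π hmono2 k])



/-- Vector rearrangement inequality for `f` with `s ↦ s * f' s` decreasing. -/
theorem vector_rearrangement_decreasing {n : ℕ} (f f' : ℝ → ℝ)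
    (hderiv : ∀ s ∈ Set.Ioi (0 : ℝ), HasDerivAt f (f' s) s)
    (hmono : AntitoneOn (fun s => s * f' s) (Set.Ioi 0))
    (u v : Fin n → ℝ) (hu : ∀ i, 0 < u i) (hv : ∀ i, 0 < v i) :
    ∑ i, f (u i * v i) ≤ ∑ i, f (sortAsc u i * sortDesc v i) ∧
      ∑ i, f (sortDesc u i * sortDesc v i) ≤ ∑ i, f (u i * v i) := by
  classical
  set σ := Tuple.sort u with hσ
  set τ := Tuple.sort v with hτ
  have hA : Monotone (sortAsc u) := Tuple.monotone_sort u
  have hB : Monotone (sortAsc v) := Tuple.monotone_sort v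
  have hA0 : ∀ i, 0 < sortAsc u i := fun i => hu _
  have hB0 : ∀ i, 0 < sortAsc v i := fun i => hv _
  have key : ∀ {a a' b b' : ℝ}, 0 < a → 0 < b → a ≤ a' → b ≤ b' →
      f (a * b) + f (a' * b') ≤ f (a * b') + f (a' * b) :=
    fun ha hb h1 h2 => swap_key f f' hderiv hmono ha hb h1 h2
  set π : Equiv.Perm (Fin n) := σ.trans τ.symm with hπ
  have huv : ∑ i, f (u i * v i) = ∑ i, f (sortAsc u i * sortAsc v (π i)) := by
    rw [← Equiv.sum_comp σ (fun i => f (u i * v i))]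
    refine Finset.sum_congr rfl fun i _ => ?_
    have h2 : sortAsc v (π i) = v (τ (τ.symm (σ i))) := rfl
    simp only [h2, Equiv.apply_symm_apply]
    rfl
  have hmax : ∑ i, f (sortAsc u i * sortDesc v i)
      = ∑ i, f (sortAsc u i * sortAsc v i.rev) := rfl
  have hmin : ∑ i, f (sortDesc u i * sortDesc v i)
      = ∑ i, f (sortAsc u i * sortAsc v i) := by
    rw [← Equiv.sum_comp (Fin.revPerm) (fun i => f (sortAsc u i * sortAsc v i))]
    rfl
  constructor
  · rw [huv, hmax]
    exact rearr_max f key _ _ hA hB hA0 hB0 π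
  · rw [huv, hmin]
    exact rearr_min f key _ _ hA hB hA0 hB0 π
end

section
/- Let f : (0,∞) → R be differentiable, and let a ≥ b > 0 and c ≥ d > 0. If s ↦ s·f'(s) is monotonically increasing on (0,∞), then f(ac) + f(bd) - f(ad) - f(bc) ≥ 0. -/
/-- The two-element exchange inequality. -/
theorem exchange_inequality (f f' : ℝ → ℝ)
    (hderiv : ∀ s ∈ Set.Ioi (0 : ℝ), HasDerivAt f (f' s) s)
    (hmono : MonotoneOn (fun s => s * f' s) (Set.Ioi 0))
    (a b c d : ℝ) (hb : 0 < b) (hab : b ≤ a) (hd : 0 < d) (hcd : d ≤ c) :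
    0 ≤ f (a * c) + f (b * d) - f (a * d) - f (b * c) := by
  have hc : 0 < c := lt_of_lt_of_le hd hcd
  set g : ℝ → ℝ := fun t => f (t * c) - f (t * d) with hg
  have hgderiv : ∀ t : ℝ, 0 < t → HasDerivAt g (f' (t * c) * c - f' (t * d) * d) t := by
    intro t ht
    have h1 : HasDerivAt (fun u : ℝ => f (u * c)) (f' (t * c) * c) t := by
      have := (hderiv (t * c) (Set.mem_Ioi.mpr (mul_pos ht hc))).comp t
        ((hasDerivAt_id t).mul_const c)
      simpa [Function.comp_def] using this
    have h2 : HasDerivAt (fun u : ℝ => f (u * d)) (f' (t * d) * d) t := by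
      have := (hderiv (t * d) (Set.mem_Ioi.mpr (mul_pos ht hd))).comp t
        ((hasDerivAt_id t).mul_const d)
      simpa [Function.comp_def] using this
    exact h1.sub h2
  have hmonog : MonotoneOn g (Set.Icc b a) := by
    apply monotoneOn_of_deriv_nonneg (convex_Icc b a)
    · intro x hx
      exact ((hgderiv x (lt_of_lt_of_le hb hx.1)).continuousAt).continuousWithinAt
    · intro x hx
      rw [interior_Icc] at hx
      exact ((hgderiv x (lt_of_lt_of_le hb (le_of_lt hx.1))).differentiableAt).differentiableWithinAt
    · intro x hx
      rw [interior_Icc] at hx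
      have hx0 : 0 < x := lt_of_lt_of_le hb (le_of_lt hx.1)
      have hkey : x * d * f' (x * d) ≤ x * c * f' (x * c) := by
        have := hmono (Set.mem_Ioi.mpr (mul_pos hx0 hd))
          (Set.mem_Ioi.mpr (mul_pos hx0 hc))
          (by nlinarith)
        simpa using this
      rw [(hgderiv x hx0).deriv]
      nlinarith
  have := hmonog (Set.mem_Icc.mpr ⟨le_refl b, hab⟩) (Set.mem_Icc.mpr ⟨hab, le_refl a⟩) hab
  simp only [hg] at this
  linarith
end

section
/- Let A, B be n×n real positive semidefinite matrices and q ≥ 1 an integer. Then Tr((B^{1/2} A B^{1/2})^q) ≤ ∑_{i=1}^n λ_i(A)^q · λ_i(B)^q. -/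
/-- The eigenvalues of a Hermitian real matrix, in non-increasing order. -/
noncomputable def eigDesc {n : ℕ} {A : Matrix (Fin n) (Fin n) ℝ} (hA : A.IsHermitian) :
    Fin n → ℝ :=
  sortDesc hA.eigenvalues

section
open scoped ComplexOrder
/-- The positive semidefinite square root of a positive semidefinite matrix
(the definition `Matrix.PosSemidef.sqrt` of the older Mathlib, since removed). -/
noncomputable def Matrix.PosSemidef.sqrt {n : Type*} [Fintype n] [DecidableEq n] {𝕜 : Type*}
    [RCLike 𝕜] {A : Matrix n n 𝕜} (hA : A.PosSemidef) : Matrix n n 𝕜 :=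
  hA.1.eigenvectorUnitary.1 * Matrix.diagonal ((↑) ∘ (√·) ∘ hA.1.eigenvalues) *
  (star hA.1.eigenvectorUnitary : Matrix n n 𝕜)
end

lemma Matrix.PosSemidef.posSemidef_sqrt {m : Type*} [Fintype m] [DecidableEq m]
    {B : Matrix m m ℝ} (hB : B.PosSemidef) : hB.sqrt.PosSemidef := by
  rw [Matrix.PosSemidef.sqrt]
  have hd := (Matrix.PosSemidef.diagonal (n := m) (R := ℝ)
    (d := ((RCLike.ofReal : ℝ → ℝ) ∘ (√·) ∘ hB.1.eigenvalues)) (fun i => by simp [Real.sqrt_nonneg]))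
  have := hd.mul_mul_conjTranspose_same (hB.1.eigenvectorUnitary : Matrix m m ℝ)
  simpa [Matrix.star_eq_conjTranspose] using this

lemma Matrix.PosSemidef.sqrt_mul_self {m : Type*} [Fintype m] [DecidableEq m]
    {B : Matrix m m ℝ} (hB : B.PosSemidef) : hB.sqrt * hB.sqrt = B := by
  have hU : star (hB.1.eigenvectorUnitary : Matrix m m ℝ) * (hB.1.eigenvectorUnitary : Matrix m m ℝ) = 1 :=
    Matrix.mem_unitaryGroup_iff'.mp hB.1.eigenvectorUnitary.2
  rw [Matrix.PosSemidef.sqrt]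
  conv_rhs => rw [hB.1.spectral_theorem]
  rw [Unitary.conjStarAlgAut_apply]
  simp only [Matrix.mul_assoc]
  rw [← Matrix.mul_assoc (star _) _ _, hU, Matrix.one_mul, ← Matrix.mul_assoc (Matrix.diagonal _),
    Matrix.diagonal_mul_diagonal]
  congr 3
  funext i
  simp [Real.mul_self_sqrt (hB.eigenvalues_nonneg i)]

open Finset Matrix BigOperators

namespace CL

variable {k n : ℕ}
abbrev Sub (k n : ℕ) := {s : Finset (Fin n) // s.card = k}
noncomputable def emb (S : Sub k n) : Fin k → Fin n := S.1.orderEmbOfFin S.2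
lemma emb_injective (S : Sub k n) : Function.Injective (emb S) :=
  (S.1.orderEmbOfFin S.2).injective
lemma emb_mem (S : Sub k n) (i : Fin k) : emb S i ∈ S.1 :=
  Finset.orderEmbOfFin_mem _ _ _
lemma image_emb (S : Sub k n) : Finset.image (emb S) univ = S.1 := by
  apply Finset.eq_of_subset_of_card_le
  · intro x hx
    rcases Finset.mem_image.1 hx with ⟨i, _, rfl⟩
    exact emb_mem S i
  · rw [Finset.card_image_of_injective _ (emb_injective S), card_univ, Fintype.card_fin, S.2]

lemma image_emb_comp (S : Sub k n) (σ : Equiv.Perm (Fin k)) :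
    Finset.image (emb S ∘ σ) univ = S.1 := by
  rw [← Finset.image_image, Finset.image_univ_equiv, image_emb]

theorem step1 (X : Matrix (Fin k) (Fin n) ℝ) (Y : Matrix (Fin n) (Fin k) ℝ) :
    (X * Y).det = ∑ r : Fin k → Fin n, (∏ i, X i (r i)) * (Y.submatrix r id).det := by
  have h0 : (X * Y).det
      = Matrix.detRowAlternating (fun i => ∑ j : Fin n, X i j • Y j) := by
    congr 1
    funext i l
    simp [Matrix.mul_apply]
  rw [h0]
  rw [show (Matrix.detRowAlternating (fun i => ∑ j : Fin n, X i j • Y j) : ℝ)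
      = (Matrix.detRowAlternating : (Fin k → ℝ) [⋀^Fin k]→ₗ[ℝ] ℝ).toMultilinearMap
          (fun i => ∑ j : Fin n, X i j • Y j) from rfl]
  rw [MultilinearMap.map_sum]
  apply Finset.sum_congr rfl
  intro r _
  rw [show ((Matrix.detRowAlternating : (Fin k → ℝ) [⋀^Fin k]→ₗ[ℝ] ℝ).toMultilinearMap
      (fun i => X i (r i) • Y (r i)))
      = (Matrix.detRowAlternating : (Fin k → ℝ) [⋀^Fin k]→ₗ[ℝ] ℝ).toMultilinearMap
        (fun i => X i (r i) • (fun i' => Y (r i')) i) from rfl]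
  rw [MultilinearMap.map_smul_univ]
  rfl

theorem step2 (T : (Fin k → Fin n) → ℝ)
    (hT : ∀ r, ¬ Function.Injective r → T r = 0) :
    ∑ r : Fin k → Fin n, T r
      = ∑ S : Sub k n, ∑ σ : Equiv.Perm (Fin k), T (emb S ∘ σ) := by
  rw [← Finset.sum_filter_add_sum_filter_not univ (fun r => Function.Injective r)]
  have h2 : ∑ r ∈ univ.filter (fun r => ¬ Function.Injective r), T r = 0 :=
    Finset.sum_eq_zero (fun r hr => hT r (Finset.mem_filter.1 hr).2)
  rw [h2, add_zero, ← Finset.sum_product']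
  refine (Finset.sum_bij (fun (p : Sub k n × Equiv.Perm (Fin k)) _ => emb p.1 ∘ p.2)
    ?_ ?_ ?_ ?_).symm
  · intro p _
    simp only [Finset.mem_filter, Finset.mem_univ, true_and]
    exact (emb_injective p.1).comp p.2.injective
  · intro p hp p' hp' h
    obtain ⟨S, σ⟩ := p
    obtain ⟨S', σ'⟩ := p'
    simp only [] at h
    have hS : S = S' := by
      apply Subtype.ext
      rw [← image_emb_comp S σ, ← image_emb_comp S' σ', h]
    subst hS
    refine Prod.ext rfl ?_
    have : σ = σ' := by
      ext i
      exact Fin.val_congr (emb_injective S (congrFun h i))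
    simpa using this
  · intro r hr
    have hinj : Function.Injective r := (Finset.mem_filter.1 hr).2
    have hcard : (Finset.image r univ).card = k := by
      rw [Finset.card_image_of_injective _ hinj, card_univ, Fintype.card_fin]
    have hφinj : Function.Injective (fun i : Fin k =>
        (Finset.orderIsoOfFin _ hcard).symm ⟨r i, Finset.mem_image_of_mem r (Finset.mem_univ i)⟩) := by
      intro a b hab
      apply hinj
      have := congrArg (fun z => ((Finset.orderIsoOfFin _ hcard) z : Fin n)) hab
      simpa using this
    have hφbij := (Finite.injective_iff_bijective).1 hφinj
    refine ⟨⟨⟨_, hcard⟩, Equiv.ofBijective _ hφbij⟩, Finset.mem_univ _, ?_⟩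
    funext i
    simp only [Function.comp_apply, Equiv.ofBijective_apply, emb]
    rw [← Finset.coe_orderIsoOfFin_apply, OrderIso.apply_symm_apply]
  · intros; rfl

open Equiv

theorem cauchy_binet {k n : ℕ} (X : Matrix (Fin k) (Fin n) ℝ) (Y : Matrix (Fin n) (Fin k) ℝ) :
    (X * Y).det = ∑ S : Sub k n, (X.submatrix id (emb S)).det * (Y.submatrix (emb S) id).det := by
  rw [step1]
  rw [step2 (fun r => (∏ i, X i (r i)) * (Y.submatrix r id).det)
    (fun r hr => by
      obtain ⟨a, b, hab, hne⟩ := Function.not_injective_iff.1 hr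
      have : (Y.submatrix r id).det = 0 :=
        Matrix.det_zero_of_row_eq hne (by funext j; simp [hab])
      simp [this])]
  apply Finset.sum_congr rfl
  intro S _
  have key : ∀ σ : Equiv.Perm (Fin k),
      (∏ i, X i ((emb S ∘ σ) i)) * ((Y.submatrix (emb S ∘ σ)) id).det
      = ((Equiv.Perm.sign σ : ℤ) : ℝ) * (∏ i, X i (emb S (σ i)))
          * (Y.submatrix (emb S) id).det := by
    intro σ
    have h1 : Y.submatrix (emb S ∘ σ) id = (Y.submatrix (emb S) id).submatrix σ id := by
      rw [Matrix.submatrix_submatrix]; rfl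
    rw [h1, Matrix.det_permute]
    simp only [Function.comp_apply]
    push_cast
    ring
  simp only [key]
  have h2 : (X.submatrix id (emb S)).det
      = ∑ σ : Equiv.Perm (Fin k), ((Equiv.Perm.sign σ : ℤ) : ℝ) * ∏ i, X i (emb S (σ i)) := by
    rw [← Matrix.det_transpose, Matrix.det_apply']
    apply Finset.sum_congr rfl
    intro σ _
    congr 1
  rw [h2, Finset.sum_mul]



section Compound
variable {k n : ℕ}

noncomputable def cpd (k : ℕ) {n : ℕ} (X : Matrix (Fin n) (Fin n) ℝ) :
    Matrix (Sub k n) (Sub k n) ℝ :=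
  fun S T => (X.submatrix (emb S) (emb T)).det

lemma cpd_mul (X Y : Matrix (Fin n) (Fin n) ℝ) : cpd k (X * Y) = cpd k X * cpd k Y := by
  ext S T
  have h : (X * Y).submatrix (emb S) (emb T)
      = (X.submatrix (emb S) id) * (Y.submatrix id (emb T)) := by
    ext i j; simp [Matrix.mul_apply]
  rw [Matrix.mul_apply]
  show ((X * Y).submatrix (emb S) (emb T)).det = _
  rw [h, cauchy_binet]
  apply Finset.sum_congr rfl
  intro U _
  rw [Matrix.submatrix_submatrix, Matrix.submatrix_submatrix]
  rfl

lemma cpd_transpose (X : Matrix (Fin n) (Fin n) ℝ) : cpd k Xᵀ = (cpd k X)ᵀ := by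
  ext S T
  show (Xᵀ.submatrix (emb S) (emb T)).det = (X.submatrix (emb T) (emb S)).det
  rw [← Matrix.transpose_submatrix, Matrix.det_transpose]

lemma exists_emb_preimage (S : Sub k n) {x : Fin n} (hx : x ∈ S.1) : ∃ i, emb S i = x := by
  have hx' : x ∈ Finset.image (emb S) univ := by rw [image_emb]; exact hx
  rcases Finset.mem_image.1 hx' with ⟨i, _, rfl⟩
  exact ⟨i, rfl⟩

lemma cpd_diag_entry_ne (X : Matrix (Fin n) (Fin n) ℝ)
    (hX : ∀ i j, i ≠ j → X i j = 0) {S T : Sub k n} (hST : S ≠ T) : cpd k X S T = 0 := by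
  have hsub : ¬ S.1 ⊆ T.1 := by
    intro hsub
    exact hST (Subtype.ext (Finset.eq_of_subset_of_card_le hsub (by rw [S.2, T.2])))
  obtain ⟨x, hxS, hxT⟩ := Finset.not_subset.1 hsub
  obtain ⟨i₀, rfl⟩ := exists_emb_preimage S hxS
  apply Matrix.det_eq_zero_of_row_eq_zero i₀
  intro j
  exact hX _ _ (fun heq => hxT (heq ▸ emb_mem T j))

lemma cpd_diagonal (d : Fin n → ℝ) :
    cpd k (Matrix.diagonal d) = Matrix.diagonal (fun S : Sub k n => ∏ i ∈ S.1, d i) := by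
  ext S T
  by_cases hST : S = T
  · subst hST
    have h : (Matrix.diagonal d).submatrix (emb S) (emb S)
        = Matrix.diagonal (fun i => d (emb S i)) := by
      ext i j
      by_cases hij : i = j
      · subst hij; simp
      · rw [Matrix.submatrix_apply, Matrix.diagonal_apply_ne, Matrix.diagonal_apply_ne _ hij]
        exact fun hc => hij (emb_injective S hc)
    show ((Matrix.diagonal d).submatrix (emb S) (emb S)).det = _
    rw [h, Matrix.det_diagonal, Matrix.diagonal_apply_eq]
    rw [← image_emb S, Finset.prod_image (fun a _ b _ hab => emb_injective S hab)]
  · rw [Matrix.diagonal_apply_ne _ hST]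
    exact cpd_diag_entry_ne _ (fun i j hij => Matrix.diagonal_apply_ne _ hij) hST

lemma cpd_one : cpd k (1 : Matrix (Fin n) (Fin n) ℝ) = 1 := by
  rw [← Matrix.diagonal_one, cpd_diagonal]
  simp

end Compound



section QF
variable {ι : Type*} [Fintype ι] [DecidableEq ι]

lemma dot_mulVec_eq (V : Matrix ι ι ℝ) (v : ι → ℝ) (u : ι → ℝ) :
    v ⬝ᵥ (V *ᵥ u) = (Vᵀ *ᵥ v) ⬝ᵥ u := by
  rw [Matrix.dotProduct_mulVec, Matrix.mulVec_transpose]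

lemma qf_le {V : Matrix ι ι ℝ} (h2 : V * Vᵀ = 1) (d : ι → ℝ) {c : ℝ}
    (hd : ∀ i, d i ≤ c) (v : ι → ℝ) :
    v ⬝ᵥ ((V * Matrix.diagonal d * Vᵀ) *ᵥ v) ≤ c * (v ⬝ᵥ v) := by
  have key : (V * Matrix.diagonal d * Vᵀ) *ᵥ v
      = V *ᵥ (Matrix.diagonal d *ᵥ (Vᵀ *ᵥ v)) := by
    rw [Matrix.mulVec_mulVec, Matrix.mulVec_mulVec]
  rw [key, dot_mulVec_eq]
  set w := Vᵀ *ᵥ v with hw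
  have h3 : w ⬝ᵥ (Matrix.diagonal d *ᵥ w) = ∑ i, d i * (w i * w i) := by
    simp [Matrix.mulVec_diagonal, dotProduct, mul_comm, mul_left_comm]
  have h4 : v ⬝ᵥ v = w ⬝ᵥ w := by
    rw [hw, ← dot_mulVec_eq, Matrix.mulVec_mulVec, h2, Matrix.one_mulVec]
  rw [h3, h4]
  have h5 : (c : ℝ) * (w ⬝ᵥ w) = ∑ i, c * (w i * w i) := by
    simp [dotProduct, Finset.mul_sum]
  rw [h5]
  apply Finset.sum_le_sum
  intro i _
  exact mul_le_mul_of_nonneg_right (hd i) (mul_self_nonneg _)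

lemma qf_witness {V : Matrix ι ι ℝ} (h1 : Vᵀ * V = 1) (d : ι → ℝ) (S₀ : ι) :
    (V *ᵥ Pi.single S₀ 1) ⬝ᵥ ((V * Matrix.diagonal d * Vᵀ) *ᵥ (V *ᵥ Pi.single S₀ 1)) = d S₀
    ∧ (V *ᵥ Pi.single S₀ 1) ⬝ᵥ (V *ᵥ Pi.single S₀ 1) = 1 := by
  set e : ι → ℝ := Pi.single S₀ 1 with he
  have hVe : Vᵀ *ᵥ (V *ᵥ e) = e := by
    rw [Matrix.mulVec_mulVec, h1, Matrix.one_mulVec]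
  constructor
  · have key : (V * Matrix.diagonal d * Vᵀ) *ᵥ (V *ᵥ e)
        = V *ᵥ (Matrix.diagonal d *ᵥ e) := by
      rw [Matrix.mulVec_mulVec, Matrix.mul_assoc, Matrix.mul_assoc, h1, Matrix.mul_one,
        ← Matrix.mulVec_mulVec]
    rw [key, dot_mulVec_eq, hVe]
    simp [he, Matrix.mulVec_diagonal, dotProduct, Pi.single_apply]
  · rw [dot_mulVec_eq, hVe]
    simp [he, dotProduct, Pi.single_apply]

end QF


lemma spectral_real {m : Type*} [Fintype m] [DecidableEq m] {A : Matrix m m ℝ}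
    (hA : A.IsHermitian) :
    ∃ V : Matrix m m ℝ, Vᵀ * V = 1 ∧ V * Vᵀ = 1 ∧
      A = V * Matrix.diagonal hA.eigenvalues * Vᵀ := by
  set V : Matrix m m ℝ := (Matrix.IsHermitian.eigenvectorUnitary hA : Matrix m m ℝ) with hV
  have hstar : star V = Vᵀ := by
    rw [Matrix.star_eq_conjTranspose, Matrix.conjTranspose_eq_transpose_of_trivial]
  have h2 : V * Vᵀ = 1 := by
    rw [← hstar]
    exact Matrix.mem_unitaryGroup_iff.mp (Matrix.IsHermitian.eigenvectorUnitary hA).2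
  have h1 : Vᵀ * V = 1 := by
    rw [← hstar]
    exact Matrix.mem_unitaryGroup_iff'.mp (Matrix.IsHermitian.eigenvectorUnitary hA).2
  refine ⟨V, h1, h2, ?_⟩
  have h := Matrix.IsHermitian.spectral_theorem hA
  rw [Unitary.conjStarAlgAut_apply, ← hV, hstar] at h
  simpa using h

lemma my_conj_pow {m : Type*} [Fintype m] [DecidableEq m] (V D : Matrix m m ℝ)
    (h1 : Vᵀ * V = 1) (h2 : V * Vᵀ = 1) (q : ℕ) :
    (V * D * Vᵀ) ^ q = V * D ^ q * Vᵀ := by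
  induction q with
  | zero => simp [h2]
  | succ q ih =>
    rw [pow_succ, ih, pow_succ]
    rw [show V * D ^ q * Vᵀ * (V * D * Vᵀ) = V * D ^ q * (Vᵀ * V) * (D * Vᵀ) by
      simp only [Matrix.mul_assoc], h1, Matrix.mul_one]
    simp only [Matrix.mul_assoc]

lemma trace_pow_eq {m : Type*} [Fintype m] [DecidableEq m] {S : Matrix m m ℝ}
    (hS : S.IsHermitian) (q : ℕ) :
    (S ^ q).trace = ∑ i, (hS.eigenvalues i) ^ q := by
  obtain ⟨V, h1, h2, hdec⟩ := spectral_real hS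
  conv_lhs => rw [hdec]
  rw [my_conj_pow V _ h1 h2, Matrix.trace_mul_cycle, h1, Matrix.one_mul,
    Matrix.diagonal_pow, Matrix.trace_diagonal]
  simp


lemma abel_nonpos (m : ℕ) (w d : ℕ → ℝ) (hw0 : ∀ i, i < m → 0 ≤ w i)
    (hw : ∀ i j, i ≤ j → j < m → w j ≤ w i)
    (hd : ∀ k, k ≤ m → ∑ i ∈ range k, d i ≤ 0) :
    ∑ i ∈ range m, w i * d i ≤ 0 := by
  rcases Nat.eq_zero_or_pos m with hm | hm
  · simp [hm]
  have hby := Finset.sum_range_by_parts (fun i => w i) (fun i => d i) m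
  simp only [smul_eq_mul] at hby
  rw [hby]
  have hterm1 : w (m - 1) * ∑ i ∈ range m, d i ≤ 0 :=
    mul_nonpos_of_nonneg_of_nonpos (hw0 _ (Nat.sub_lt hm one_pos)) (hd m le_rfl)
  have hterm2 : 0 ≤ ∑ i ∈ range (m - 1), (w (i + 1) - w i) * ∑ j ∈ range (i + 1), d j := by
    apply Finset.sum_nonneg
    intro i hi
    have hi' : i + 1 < m := by
      have := Finset.mem_range.1 hi
      omega
    have ha : w (i + 1) - w i ≤ 0 := by
      simp only [sub_nonpos]
      exact hw i (i + 1) (Nat.le_succ i) hi'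
    have hb : ∑ j ∈ range (i + 1), d j ≤ 0 := hd (i + 1) (le_of_lt hi')
    nlinarith
  linarith

lemma pos_case (m : ℕ) (u v : ℕ → ℝ)
    (hu : ∀ i j, i ≤ j → j < m → u j ≤ u i)
    (hu0 : ∀ i, i < m → 0 < u i) (hv0 : ∀ i, i < m → 0 < v i)
    (hprod : ∀ k, k ≤ m → ∏ i ∈ range k, u i ≤ ∏ i ∈ range k, v i) :
    ∑ i ∈ range m, u i ≤ ∑ i ∈ range m, v i := by
  have key : ∀ i, i < m → u i - v i ≤ u i * (Real.log (u i) - Real.log (v i)) := by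
    intro i hi
    have h1 : Real.log (v i) - Real.log (u i) + 1 ≤ Real.exp (Real.log (v i) - Real.log (u i)) :=
      Real.add_one_le_exp _
    have h2 : Real.exp (Real.log (v i) - Real.log (u i)) = v i / u i := by
      rw [Real.exp_sub, Real.exp_log (hv0 i hi), Real.exp_log (hu0 i hi)]
    rw [h2] at h1
    have h3 := mul_le_mul_of_nonneg_left h1 (le_of_lt (hu0 i hi))
    rw [mul_div_cancel₀ _ (ne_of_gt (hu0 i hi))] at h3
    nlinarith [hu0 i hi]
  have habel : ∑ i ∈ range m, u i * (Real.log (u i) - Real.log (v i)) ≤ 0 := by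
    apply abel_nonpos m u _ (fun i hi => le_of_lt (hu0 i hi)) hu
    intro k hk
    have hlogu : ∑ i ∈ range k, (Real.log (u i) - Real.log (v i))
        = Real.log (∏ i ∈ range k, u i) - Real.log (∏ i ∈ range k, v i) := by
      rw [Real.log_prod (fun i hi => ne_of_gt (hu0 i (lt_of_lt_of_le (Finset.mem_range.1 hi) hk))),
        Real.log_prod (fun i hi => ne_of_gt (hv0 i (lt_of_lt_of_le (Finset.mem_range.1 hi) hk))),
        Finset.sum_sub_distrib]
    rw [hlogu, sub_nonpos]
    apply Real.log_le_log
    · exact Finset.prod_pos (fun i hi => hu0 i (lt_of_lt_of_le (Finset.mem_range.1 hi) hk))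
    · exact hprod k hk
  have hsum : ∑ i ∈ range m, (u i - v i) ≤ ∑ i ∈ range m, u i * (Real.log (u i) - Real.log (v i)) :=
    Finset.sum_le_sum (fun i hi => key i (Finset.mem_range.1 hi))
  have := le_trans hsum habel
  rw [Finset.sum_sub_distrib] at this
  linarith

lemma scalar_main (m : ℕ) (u v : ℕ → ℝ)
    (hu : ∀ i j, i ≤ j → j < m → u j ≤ u i)
    (hu0 : ∀ i, i < m → 0 ≤ u i) (hv0 : ∀ i, i < m → 0 ≤ v i)
    (hprod : ∀ k, k ≤ m → ∏ i ∈ range k, u i ≤ ∏ i ∈ range k, v i) :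
    ∑ i ∈ range m, u i ≤ ∑ i ∈ range m, v i := by
  have hvpos : ∀ mm, mm ≤ m → (∀ i, i < mm → 0 < u i) → ∀ i, i < mm → 0 < v i := by
    intro mm hmm hupos i hi
    rcases lt_or_eq_of_le (hv0 i (lt_of_lt_of_le hi hmm)) with h | h
    · exact h
    · exfalso
      have hz : ∏ j ∈ range (i + 1), v j = 0 :=
        Finset.prod_eq_zero (Finset.mem_range.2 (Nat.lt_succ_self i)) h.symm
      have hp : 0 < ∏ j ∈ range (i + 1), u j :=
        Finset.prod_pos (fun j hj => hupos j (lt_of_lt_of_le (Finset.mem_range.1 hj) (Nat.succ_le_of_lt hi)))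
      have := hprod (i + 1) (Nat.succ_le_of_lt (lt_of_lt_of_le hi hmm))
      rw [hz] at this
      linarith
  by_cases hall : ∀ i, i < m → 0 < u i
  · exact pos_case m u v hu hall (hvpos m le_rfl hall) hprod
  · push_neg at hall
    obtain ⟨i₁, hi₁m, hi₁⟩ := hall
    have hex : ∃ i, u i ≤ 0 ∧ i < m := ⟨i₁, hi₁, hi₁m⟩
    classical
    set i₀ := Nat.find hex with hi₀def
    obtain ⟨hu_i₀, hi₀m⟩ := Nat.find_spec hex
    have hmin : ∀ i, i < i₀ → 0 < u i := by
      intro i hi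
      by_contra hc
      push_neg at hc
      exact absurd (Nat.find_le ⟨hc, lt_trans hi hi₀m⟩) (not_le.2 hi)
    have huzero : ∀ i, i₀ ≤ i → i < m → u i = 0 := by
      intro i h1 h2
      have : u i ≤ u i₀ := hu i₀ i h1 h2
      have h3 : u i ≤ 0 := le_trans this hu_i₀
      exact le_antisymm h3 (hu0 i h2)
    have hsumu : ∑ i ∈ range m, u i = ∑ i ∈ range i₀, u i := by
      symm
      apply Finset.sum_subset (Finset.range_subset_range.2 (le_of_lt hi₀m))
      intro x hx hnx
      exact huzero x (le_of_not_gt (fun hc => hnx (Finset.mem_range.2 hc))) (Finset.mem_range.1 hx)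
    have hstep : ∑ i ∈ range i₀, u i ≤ ∑ i ∈ range i₀, v i := by
      apply pos_case i₀ u v
      · intro i j hij hj
        exact hu i j hij (lt_trans hj hi₀m)
      · exact hmin
      · exact hvpos i₀ (le_of_lt hi₀m) hmin
      · intro k hk
        exact hprod k (le_trans hk (le_of_lt hi₀m))
    have hlast : ∑ i ∈ range i₀, v i ≤ ∑ i ∈ range m, v i := by
      apply Finset.sum_le_sum_of_subset_of_nonneg (Finset.range_subset_range.2 (le_of_lt hi₀m))
      intro i hi _
      exact hv0 i (Finset.mem_range.1 hi)
    linarith [hsumu ▸ hstep]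



lemma sortDesc_antitone {n : ℕ} (u : Fin n → ℝ) : Antitone (sortDesc u) := by
  intro i j hij
  exact Tuple.monotone_sort u (Fin.rev_le_rev.2 hij)

noncomputable def sortPerm {n : ℕ} (u : Fin n → ℝ) : Equiv.Perm (Fin n) :=
  Fin.revPerm.trans (Tuple.sort u)

lemma sortDesc_eq {n : ℕ} (u : Fin n → ℝ) : sortDesc u = u ∘ (sortPerm u) := rfl

lemma sum_sortDesc {n : ℕ} (f : ℝ → ℝ) (u : Fin n → ℝ) :
    ∑ i, f (sortDesc u i) = ∑ i, f (u i) := by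
  rw [sortDesc_eq]
  exact Equiv.sum_comp (sortPerm u) (fun i => f (u i))

lemma fin_strictMono_le {k n : ℕ} (f : Fin k → Fin n) (hf : StrictMono f) (j : Fin k) :
    (j : ℕ) ≤ (f j : ℕ) := by
  induction' hj : (j : ℕ) with m ih generalizing j
  · exact Nat.zero_le _
  · have hm : m < k := by omega
    have hlt : (⟨m, hm⟩ : Fin k) < j := by
      rw [Fin.lt_def, hj]; exact Nat.lt_succ_self m
    have h1 : (f ⟨m, hm⟩ : ℕ) < (f j : ℕ) := hf hlt
    have h2 := ih ⟨m, hm⟩ rfl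
    omega

lemma prod_over_subset_le {n k : ℕ} (hkn : k ≤ n) {w : Fin n → ℝ} (hw : Antitone w)
    (hw0 : ∀ i, 0 ≤ w i) (S : Finset (Fin n)) (hS : S.card = k) :
    ∏ i ∈ S, w i ≤ ∏ j : Fin k, w (Fin.castLE hkn j) := by
  have himg : Finset.image (S.orderEmbOfFin hS) univ = S := by
    apply Finset.eq_of_subset_of_card_le
    · intro x hx
      rcases Finset.mem_image.1 hx with ⟨i, _, rfl⟩
      exact Finset.orderEmbOfFin_mem S hS i
    · rw [Finset.card_image_of_injective _ (S.orderEmbOfFin hS).injective, card_univ,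
        Fintype.card_fin, hS]
  have h1 : ∏ i ∈ S, w i = ∏ j : Fin k, w (S.orderEmbOfFin hS j) := by
    conv_lhs => rw [← himg]
    rw [Finset.prod_image (fun a _ b _ hab => (S.orderEmbOfFin hS).injective hab)]
  rw [h1]
  apply Finset.prod_le_prod (fun j _ => hw0 _)
  intro j _
  apply hw
  rw [Fin.le_def]
  exact fin_strictMono_le _ (S.orderEmbOfFin hS).strictMono j

lemma prod_mem_le {n k : ℕ} (hkn : k ≤ n) (x : Fin n → ℝ) (hx0 : ∀ i, 0 ≤ x i)
    (S : Finset (Fin n)) (hS : S.card = k) :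
    ∏ i ∈ S, x i ≤ ∏ j : Fin k, sortDesc x (Fin.castLE hkn j) := by
  have hx : ∀ i, x i = sortDesc x ((sortPerm x).symm i) := by
    intro i
    rw [sortDesc_eq, Function.comp_apply, Equiv.apply_symm_apply]
  have h1 : ∏ i ∈ S, x i = ∏ i ∈ S.image (sortPerm x).symm, sortDesc x i := by
    rw [Finset.prod_image (fun a _ b _ hab => (sortPerm x).symm.injective hab)]
    exact Finset.prod_congr rfl (fun i _ => hx i)
  rw [h1]
  apply prod_over_subset_le hkn (sortDesc_antitone x)
  · intro i
    rw [sortDesc_eq]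
    exact hx0 _
  · rw [Finset.card_image_of_injective _ (sortPerm x).symm.injective, hS]

lemma cpd_spectral {k n : ℕ} {X V : Matrix (Fin n) (Fin n) ℝ} {d : Fin n → ℝ}
    (h1 : Vᵀ * V = 1) (h2 : V * Vᵀ = 1) (hX : X = V * Matrix.diagonal d * Vᵀ) :
    ((cpd k V)ᵀ * cpd k V = 1) ∧ (cpd k V * (cpd k V)ᵀ = 1) ∧
      cpd k X = cpd k V * Matrix.diagonal (fun S : Sub k n => ∏ i ∈ S.1, d i) * (cpd k V)ᵀ := by
  refine ⟨?_, ?_, ?_⟩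
  · rw [← cpd_transpose, ← cpd_mul, h1, cpd_one]
  · rw [← cpd_transpose, ← cpd_mul, h2, cpd_one]
  · rw [hX, cpd_mul, cpd_mul, cpd_diagonal, cpd_transpose]

lemma sqrt_transpose {n : ℕ} {B : Matrix (Fin n) (Fin n) ℝ} (hB : B.PosSemidef) :
    (hB.sqrt)ᵀ = hB.sqrt := by
  have h := hB.posSemidef_sqrt.1
  rwa [Matrix.IsHermitian, Matrix.conjTranspose_eq_transpose_of_trivial] at h

lemma logmaj {n : ℕ} {A B : Matrix (Fin n) (Fin n) ℝ} (hA : A.PosSemidef) (hB : B.PosSemidef)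
    {k : ℕ} (hkn : k ≤ n) (hM : (hB.sqrt * A * hB.sqrt).PosSemidef) :
    ∏ j : Fin k, sortDesc hM.1.eigenvalues (Fin.castLE hkn j)
      ≤ (∏ j : Fin k, sortDesc hA.1.eigenvalues (Fin.castLE hkn j))
        * (∏ j : Fin k, sortDesc hB.1.eigenvalues (Fin.castLE hkn j)) := by
  classical
  set μ : Fin n → ℝ := hM.1.eigenvalues with hμ
  set a : Fin n → ℝ := hA.1.eigenvalues with ha
  set b : Fin n → ℝ := hB.1.eigenvalues with hb
  set ca : ℝ := ∏ j : Fin k, sortDesc a (Fin.castLE hkn j) with hca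
  set cb : ℝ := ∏ j : Fin k, sortDesc b (Fin.castLE hkn j) with hcb
  obtain ⟨VM, hM1, hM2, hMd⟩ := spectral_real hM.1
  obtain ⟨VA, hA1, hA2, hAd⟩ := spectral_real hA.1
  obtain ⟨VB, hB1, hB2, hBd⟩ := spectral_real hB.1
  obtain ⟨hWM1, hWM2, hcM⟩ := cpd_spectral (k := k) hM1 hM2 hMd
  obtain ⟨hWA1, hWA2, hcA⟩ := cpd_spectral (k := k) hA1 hA2 hAd
  obtain ⟨hWB1, hWB2, hcB⟩ := cpd_spectral (k := k) hB1 hB2 hBd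
  -- the subset realizing the top-k product of μ
  have hinj : Function.Injective (fun j : Fin k => sortPerm μ (Fin.castLE hkn j)) :=
    fun x y hxy => (Fin.castLE_injective hkn) ((sortPerm μ).injective hxy)
  set S₀ : Finset (Fin n) := Finset.image (fun j : Fin k => sortPerm μ (Fin.castLE hkn j)) univ
    with hS₀
  have hcard : S₀.card = k := by
    rw [hS₀, Finset.card_image_of_injective _ hinj, card_univ, Fintype.card_fin]
  set Sx : Sub k n := ⟨S₀, hcard⟩ with hSx
  have hprod0 : ∏ j : Fin k, sortDesc μ (Fin.castLE hkn j) = ∏ i ∈ S₀, μ i := by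
    rw [hS₀, Finset.prod_image (fun x _ y _ hxy => hinj hxy)]
    rfl
  -- witness vector
  obtain ⟨hwit, hwnorm⟩ := qf_witness hWM1 (fun S : Sub k n => ∏ i ∈ S.1, μ i) Sx
  set w : Sub k n → ℝ := cpd k VM *ᵥ Pi.single Sx 1 with hwdef
  clear_value w
  have hval : ∏ i ∈ S₀, μ i = w ⬝ᵥ (cpd k (hB.sqrt * A * hB.sqrt) *ᵥ w) := by
    rw [hcM]
    exact hwit.symm
  -- factor the compound
  have hfact : cpd k (hB.sqrt * A * hB.sqrt)
      = cpd k hB.sqrt * cpd k A * cpd k hB.sqrt := by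
    rw [cpd_mul, cpd_mul]
  set P : Matrix (Sub k n) (Sub k n) ℝ := cpd k hB.sqrt with hPdef
  have hPsymm : Pᵀ = P := by
    rw [hPdef, ← cpd_transpose, sqrt_transpose hB]
  set z : Sub k n → ℝ := P *ᵥ w with hzdef
  clear_value z
  have hstep : w ⬝ᵥ (cpd k (hB.sqrt * A * hB.sqrt) *ᵥ w) = z ⬝ᵥ (cpd k A *ᵥ z) := by
    rw [hfact]
    have h1 : (P * cpd k A * P) *ᵥ w = P *ᵥ (cpd k A *ᵥ (P *ᵥ w)) := by
      rw [Matrix.mulVec_mulVec, Matrix.mulVec_mulVec]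
    rw [h1, dot_mulVec_eq, hPsymm, ← hzdef]
  -- bound by A-part
  have hAbound : z ⬝ᵥ (cpd k A *ᵥ z) ≤ ca * (z ⬝ᵥ z) := by
    rw [hcA]
    apply qf_le hWA2
    intro S
    exact prod_mem_le hkn a (fun i => hA.eigenvalues_nonneg i) S.1 S.2
  -- z ⬝ z equals quadratic form of compound of B
  have hzz : z ⬝ᵥ z = w ⬝ᵥ (cpd k B *ᵥ w) := by
    have hPP : P * P = cpd k B := by
      rw [hPdef, ← cpd_mul, hB.sqrt_mul_self]
    rw [hzdef, dot_mulVec_eq, Matrix.mulVec_mulVec, hPsymm, hPP, dotProduct_comm]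
  have hBbound : w ⬝ᵥ (cpd k B *ᵥ w) ≤ cb * (w ⬝ᵥ w) := by
    rw [hcB]
    apply qf_le hWB2
    intro S
    exact prod_mem_le hkn b (fun i => hB.eigenvalues_nonneg i) S.1 S.2
  have hca0 : 0 ≤ ca := by
    apply Finset.prod_nonneg
    intro j _
    rw [sortDesc_eq]
    exact hA.eigenvalues_nonneg _
  calc ∏ j : Fin k, sortDesc μ (Fin.castLE hkn j) = z ⬝ᵥ (cpd k A *ᵥ z) := by
        rw [hprod0, hval, hstep]
    _ ≤ ca * (z ⬝ᵥ z) := hAbound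
    _ = ca * (w ⬝ᵥ (cpd k B *ᵥ w)) := by rw [hzz]
    _ ≤ ca * (cb * (w ⬝ᵥ w)) := mul_le_mul_of_nonneg_left hBbound hca0
    _ = ca * cb := by rw [hwnorm, mul_one]

end CL

/-- Carlen–Lieb upper bound for integer powers:
`Tr((B^{1/2} A B^{1/2})^q) ≤ ∑ λᵢ(A)^q λᵢ(B)^q`. -/
theorem carlen_lieb_upper {n : ℕ} {A B : Matrix (Fin n) (Fin n) ℝ}
    (hA : A.PosSemidef) (hB : B.PosSemidef) (q : ℕ) (hq : 1 ≤ q) :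
    ((hB.sqrt * A * hB.sqrt) ^ q).trace ≤
      ∑ i, eigDesc hA.1 i ^ q * eigDesc hB.1 i ^ q := by
  classical
  have hM : (hB.sqrt * A * hB.sqrt).PosSemidef := by
    have h := hA.mul_mul_conjTranspose_same hB.sqrt
    rwa [hB.posSemidef_sqrt.1.eq] at h
  set μ : Fin n → ℝ := hM.1.eigenvalues with hμ
  have hμ0 : ∀ i, 0 ≤ sortDesc μ i := by
    intro i
    rw [CL.sortDesc_eq]
    exact hM.eigenvalues_nonneg _
  have ha0 : ∀ i, 0 ≤ eigDesc hA.1 i := by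
    intro i
    rw [eigDesc, CL.sortDesc_eq]
    exact hA.eigenvalues_nonneg _
  have hb0 : ∀ i, 0 ≤ eigDesc hB.1 i := by
    intro i
    rw [eigDesc, CL.sortDesc_eq]
    exact hB.eigenvalues_nonneg _
  -- padded sequences
  set u : ℕ → ℝ := fun i => if h : i < n then (sortDesc μ ⟨i, h⟩) ^ q else 0 with hu
  set v : ℕ → ℝ := fun i =>
    if h : i < n then eigDesc hA.1 ⟨i, h⟩ ^ q * eigDesc hB.1 ⟨i, h⟩ ^ q else 0 with hv
  have hkey : ∑ i ∈ Finset.range n, u i ≤ ∑ i ∈ Finset.range n, v i := by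
    apply CL.scalar_main
    · -- antitone
      intro i j hij hjn
      rw [hu]
      simp only []
      rw [dif_pos hjn, dif_pos (lt_of_le_of_lt hij hjn)]
      apply pow_le_pow_left₀ (hμ0 _)
      exact CL.sortDesc_antitone μ (by exact hij)
    · intro i hi
      rw [hu]; simp only []; rw [dif_pos hi]
      exact pow_nonneg (hμ0 _) q
    · intro i hi
      rw [hv]; simp only []; rw [dif_pos hi]
      exact mul_nonneg (pow_nonneg (ha0 _) q) (pow_nonneg (hb0 _) q)
    · intro k hk
      have hLu : ∏ i ∈ Finset.range k, u i
          = (∏ j : Fin k, sortDesc μ (Fin.castLE hk j)) ^ q := by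
        rw [← Fin.prod_univ_eq_prod_range, ← Finset.prod_pow]
        apply Finset.prod_congr rfl
        intro j _
        rw [hu]; simp only []
        rw [dif_pos (lt_of_lt_of_le j.isLt hk)]
        rfl
      have hLv : ∏ i ∈ Finset.range k, v i
          = (∏ j : Fin k, eigDesc hA.1 (Fin.castLE hk j)) ^ q
            * (∏ j : Fin k, eigDesc hB.1 (Fin.castLE hk j)) ^ q := by
        rw [← Fin.prod_univ_eq_prod_range, ← Finset.prod_pow, ← Finset.prod_pow,
          ← Finset.prod_mul_distrib]
        apply Finset.prod_congr rfl
        intro j _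
        rw [hv]; simp only []
        rw [dif_pos (lt_of_lt_of_le j.isLt hk)]
        rfl
      rw [hLu, hLv, ← mul_pow]
      apply pow_le_pow_left₀
      · exact Finset.prod_nonneg (fun j _ => hμ0 _)
      · exact CL.logmaj hA hB hk hM
  -- translate both sides
  have hL : ((hB.sqrt * A * hB.sqrt) ^ q).trace = ∑ i ∈ Finset.range n, u i := by
    rw [CL.trace_pow_eq hM.1 q, ← hμ]
    rw [← CL.sum_sortDesc (fun x => x ^ q) μ]
    rw [← Fin.sum_univ_eq_sum_range]
    apply Finset.sum_congr rfl
    intro i _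
    rw [hu]; simp only []
    rw [dif_pos i.isLt]
  have hR : ∑ i, eigDesc hA.1 i ^ q * eigDesc hB.1 i ^ q = ∑ i ∈ Finset.range n, v i := by
    rw [← Fin.sum_univ_eq_sum_range]
    apply Finset.sum_congr rfl
    intro i _
    rw [hv]; simp only []
    rw [dif_pos i.isLt]
  rw [hL, hR]
  exact hkey
end

section
/- Let α, β be real numbers with α·β > 0 and α + β ≠ 0, and define f(s) = log((α s^β + β s^{−α})/(α + β)) for s > 0. Then s ↦ s·f'(s) is strictly increasing on (0,∞); in particular (s f'(s))' = α β (α+β)² s^{β−α−1} / (α s^β + β s^{−α})² > 0 for all s > 0. -/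
/-- For the kernel `f(s) = log((α s^β + β s^(-α)) / (α + β))` of the Alpha-Beta
log-det divergence with `αβ > 0` and `α + β ≠ 0`, the map `s ↦ s * f'(s)` is strictly
increasing on `(0,∞)`; in particular its derivative is
`αβ(α+β)² s^(β-α-1) / (α s^β + β s^(-α))² > 0`. -/
theorem ab_logdet_kernel_strictMono (α β : ℝ) (hαβ : 0 < α * β) (hsum : α + β ≠ 0) :
    StrictMonoOn
        (fun s : ℝ =>
          s * deriv (fun t : ℝ => Real.log ((α * t ^ β + β * t ^ (-α)) / (α + β))) s)
        (Set.Ioi 0) ∧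
      ∀ s ∈ Set.Ioi (0 : ℝ),
        HasDerivAt
            (fun s : ℝ =>
              s * deriv (fun t : ℝ => Real.log ((α * t ^ β + β * t ^ (-α)) / (α + β))) s)
            (α * β * (α + β) ^ 2 * s ^ (β - α - 1) /
              (α * s ^ β + β * s ^ (-α)) ^ 2) s ∧
          0 < α * β * (α + β) ^ 2 * s ^ (β - α - 1) /
              (α * s ^ β + β * s ^ (-α)) ^ 2 := by
  have hgne : ∀ s : ℝ, 0 < s → α * s ^ β + β * s ^ (-α) ≠ 0 := by
    intro s hs
    have h1 := Real.rpow_pos_of_pos hs β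
    have h2 := Real.rpow_pos_of_pos hs (-α)
    rcases mul_pos_iff.mp hαβ with ⟨ha, hb⟩ | ⟨ha, hb⟩
    · exact ne_of_gt (by nlinarith)
    · exact ne_of_lt (by nlinarith)
  -- derivative of the log kernel
  have key : ∀ s : ℝ, s ∈ Set.Ioi (0:ℝ) →
      deriv (fun t : ℝ => Real.log ((α * t ^ β + β * t ^ (-α)) / (α + β))) s
        = (α * (β * s ^ (β - 1)) + β * (-α * s ^ (-α - 1))) /
            (α * s ^ β + β * s ^ (-α)) := by
    intro s hs
    have hs' : (0:ℝ) < s := hs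
    have hA : HasDerivAt (fun t : ℝ => t ^ β) (β * s ^ (β - 1)) s :=
      Real.hasDerivAt_rpow_const (Or.inl hs'.ne')
    have hB : HasDerivAt (fun t : ℝ => t ^ (-α)) (-α * s ^ (-α - 1)) s :=
      Real.hasDerivAt_rpow_const (Or.inl hs'.ne')
    have hg : HasDerivAt (fun t : ℝ => α * t ^ β + β * t ^ (-α))
        (α * (β * s ^ (β - 1)) + β * (-α * s ^ (-α - 1))) s :=
      (hA.const_mul α).add (hB.const_mul β)
    have hgs := hgne s hs'
    have hu : HasDerivAt (fun t : ℝ => (α * t ^ β + β * t ^ (-α)) / (α + β))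
        ((α * (β * s ^ (β - 1)) + β * (-α * s ^ (-α - 1))) / (α + β)) s :=
      hg.div_const _
    have huv : (α * s ^ β + β * s ^ (-α)) / (α + β) ≠ 0 := div_ne_zero hgs hsum
    rw [(hu.log huv).deriv]
    field_simp
  -- the simplified function
  set h : ℝ → ℝ := fun t => α * β * (t ^ β - t ^ (-α)) / (α * t ^ β + β * t ^ (-α)) with hh_def
  have hh : ∀ s : ℝ, s ∈ Set.Ioi (0:ℝ) →
      HasDerivAt h
        (α * β * (α + β) ^ 2 * s ^ (β - α - 1) / (α * s ^ β + β * s ^ (-α)) ^ 2) s := by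
    intro s hs
    have hs' : (0:ℝ) < s := hs
    have hA : HasDerivAt (fun t : ℝ => t ^ β) (β * s ^ (β - 1)) s :=
      Real.hasDerivAt_rpow_const (Or.inl hs'.ne')
    have hB : HasDerivAt (fun t : ℝ => t ^ (-α)) (-α * s ^ (-α - 1)) s :=
      Real.hasDerivAt_rpow_const (Or.inl hs'.ne')
    have hg : HasDerivAt (fun t : ℝ => α * t ^ β + β * t ^ (-α))
        (α * (β * s ^ (β - 1)) + β * (-α * s ^ (-α - 1))) s :=
      (hA.const_mul α).add (hB.const_mul β)
    have hgs := hgne s hs'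
    have hN : HasDerivAt (fun t : ℝ => α * β * (t ^ β - t ^ (-α)))
        (α * β * (β * s ^ (β - 1) - -α * s ^ (-α - 1))) s :=
      (hA.sub hB).const_mul (α * β)
    have := hN.div hg hgs
    convert this using 1
    case e'_4 => rfl
    case e'_5 => rfl
    case e'_8 => rfl
    have e1 : s ^ (β - 1) = s ^ β / s := by
      rw [Real.rpow_sub hs', Real.rpow_one]
    have e2 : s ^ (-α - 1) = s ^ (-α) / s := by
      rw [Real.rpow_sub hs', Real.rpow_one]
    have e3 : s ^ (β - α - 1) = s ^ β * s ^ (-α) / s := by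
      rw [show β - α - 1 = β + -α - 1 by ring, Real.rpow_sub hs', Real.rpow_add hs',
        Real.rpow_one]
    rw [e1, e2, e3]
    rw [div_eq_div_iff (by positivity) (by positivity)]
    field_simp
    ring
  -- the original s * f'(s) agrees with h on Ioi 0
  have heq : Set.EqOn
      (fun s : ℝ =>
        s * deriv (fun t : ℝ => Real.log ((α * t ^ β + β * t ^ (-α)) / (α + β))) s)
      h (Set.Ioi 0) := by
    intro s hs
    have hs' : (0:ℝ) < s := hs
    have hgs := hgne s hs'
    simp only [hh_def]
    rw [key s hs]
    have e1 : s ^ (β - 1) = s ^ β / s := by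
      rw [Real.rpow_sub hs', Real.rpow_one]
    have e2 : s ^ (-α - 1) = s ^ (-α) / s := by
      rw [Real.rpow_sub hs', Real.rpow_one]
    rw [e1, e2]
    field_simp
    ring
  have hderiv : ∀ s ∈ Set.Ioi (0:ℝ),
      HasDerivAt
        (fun s : ℝ =>
          s * deriv (fun t : ℝ => Real.log ((α * t ^ β + β * t ^ (-α)) / (α + β))) s)
        (α * β * (α + β) ^ 2 * s ^ (β - α - 1) / (α * s ^ β + β * s ^ (-α)) ^ 2) s := by
    intro s hs
    exact (hh s hs).congr_of_eventuallyEq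
      (Filter.eventuallyEq_of_mem (isOpen_Ioi.mem_nhds hs) heq)
  have hpos : ∀ s ∈ Set.Ioi (0:ℝ),
      0 < α * β * (α + β) ^ 2 * s ^ (β - α - 1) / (α * s ^ β + β * s ^ (-α)) ^ 2 := by
    intro s hs
    have hs' : (0:ℝ) < s := hs
    have hgs := hgne s hs'
    have h1 : (0:ℝ) < (α + β) ^ 2 := by positivity
    have h2 : (0:ℝ) < s ^ (β - α - 1) := Real.rpow_pos_of_pos hs' _
    have h3 : (0:ℝ) < (α * s ^ β + β * s ^ (-α)) ^ 2 := by positivity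
    exact div_pos (mul_pos (mul_pos hαβ h1) h2) h3
  refine ⟨?_, fun s hs => ⟨hderiv s hs, hpos s hs⟩⟩
  apply StrictMonoOn.congr (StrictMonoOn.mono ?_ (le_refl _)) heq.symm
  apply strictMonoOn_of_hasDerivWithinAt_pos (convex_Ioi 0)
    (fun s hs => ((hh s hs).continuousAt.continuousWithinAt))
    (fun s hs => ((hh s (interior_subset hs)).hasDerivWithinAt))
  intro s hs
  rw [interior_Ioi] at hs
  exact hpos s hs
end

section
/- Let A, B be n×n real positive definite matrices and α ≠ 0. Then (1/α²)·∑_{i=1}^n (λ_i(B)^α/λ_i(A)^α − log(λ_i(B)^α/λ_i(A)^α) − 1) ≤ (1/α²)·(Tr((BA^{−1})^α − I) − α·log det(BA^{−1})) ≤ (1/α²)·∑_{i=1}^n (λ_{n−i+1}(B)^α/λ_i(A)^α − log(λ_{n−i+1}(B)^α/λ_i(A)^α) − 1). -/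
/-- The matrix logarithm (via the continuous functional calculus; the genuine
matrix logarithm on symmetric positive definite matrices). -/
noncomputable def mLog {n : ℕ} (M : Matrix (Fin n) (Fin n) ℝ) : Matrix (Fin n) (Fin n) ℝ :=
  cfc Real.log M

/-- Real matrix power (via the continuous functional calculus; agrees with the
spectral-decomposition definition on symmetric positive (semi)definite matrices). -/
noncomputable def mPow {n : ℕ} (M : Matrix (Fin n) (Fin n) ℝ) (q : ℝ) :
    Matrix (Fin n) (Fin n) ℝ :=
  cfc (fun t : ℝ => t ^ q) M

open Finset Matrix Polynomial

namespace ABLD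

variable {n : ℕ}


variable {n : ℕ}

/-- the permutation with `sortDesc u = u ∘ sortPermD u` -/
noncomputable def sortPermD (u : Fin n → ℝ) : Equiv.Perm (Fin n) :=
  (Fin.revPerm).trans (Tuple.sort u)

lemma sortDesc_eq (u : Fin n → ℝ) : sortDesc u = u ∘ (sortPermD u) := rfl

lemma sortDesc_apply (u : Fin n → ℝ) (i : Fin n) :
    sortDesc u i = u (sortPermD u i) := rfl

lemma monotone_sortAsc (u : Fin n → ℝ) : Monotone (sortAsc u) := Tuple.monotone_sort u

lemma antitone_sortDesc (u : Fin n → ℝ) : Antitone (sortDesc u) := by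
  intro i j hij
  exact monotone_sortAsc u (by simpa [Fin.rev_le_rev] using hij)

lemma sum_comp_sortDesc (u : Fin n → ℝ) (f : ℝ → ℝ) :
    ∑ i, f (sortDesc u i) = ∑ i, f (u i) := by
  rw [show (∑ i, f (sortDesc u i)) = ∑ i, (f ∘ u) ((sortPermD u) i) from rfl]
  exact Equiv.sum_comp (sortPermD u) (f ∘ u)

lemma prod_comp_sortDesc (u : Fin n → ℝ) (f : ℝ → ℝ) :
    ∏ i, f (sortDesc u i) = ∏ i, f (u i) := by
  rw [show (∏ i, f (sortDesc u i)) = ∏ i, (f ∘ u) ((sortPermD u) i) from rfl]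
  exact Equiv.prod_comp (sortPermD u) (f ∘ u)

/-- multiset of values of a tuple -/
def mset (u : Fin n → ℝ) : Multiset ℝ := Multiset.map u Finset.univ.val

lemma mset_comp_perm (u : Fin n → ℝ) (σ : Equiv.Perm (Fin n)) :
    mset (u ∘ σ) = mset u := by
  unfold mset
  have : (Finset.univ.val : Multiset (Fin n)).map ⇑σ = Finset.univ.val := by
    have := congrArg Finset.val (map_univ_equiv σ)
    simpa [Finset.map_val] using this
  calc Multiset.map (u ∘ ⇑σ) Finset.univ.val
      = Multiset.map u (Multiset.map ⇑σ Finset.univ.val) := by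
        rw [Multiset.map_map]
    _ = Multiset.map u Finset.univ.val := by rw [this]

lemma mset_eq_coe_ofFn (u : Fin n → ℝ) : mset u = ↑(List.ofFn u) := by
  unfold mset
  rw [Fin.univ_def, List.ofFn_eq_map]
  rfl

lemma monotone_unique {u v : Fin n → ℝ} (hu : Monotone u) (hv : Monotone v)
    (h : mset u = mset v) : u = v := by
  rw [mset_eq_coe_ofFn, mset_eq_coe_ofFn] at h
  have hp : (List.ofFn u).Perm (List.ofFn v) := Multiset.coe_eq_coe.mp h
  exact List.ofFn_injective <| List.Perm.eq_of_sortedLE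
    (List.sortedLE_ofFn_iff.mpr hu) (List.sortedLE_ofFn_iff.mpr hv) hp

lemma sortAsc_eq_of_mset {u v : Fin n → ℝ} (h : mset u = mset v) :
    sortAsc u = sortAsc v := by
  refine monotone_unique (monotone_sortAsc u) (monotone_sortAsc v) ?_
  have h1 : mset (sortAsc u) = mset u := mset_comp_perm u (Tuple.sort u)
  have h2 : mset (sortAsc v) = mset v := mset_comp_perm v (Tuple.sort v)
  rw [h1, h2, h]

lemma sortDesc_eq_of_mset {u v : Fin n → ℝ} (h : mset u = mset v) :
    sortDesc u = sortDesc v := by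
  unfold sortDesc
  rw [sortAsc_eq_of_mset h]

lemma sortDesc_mem (u : Fin n → ℝ) (i : Fin n) : ∃ j, sortDesc u i = u j :=
  ⟨sortPermD u i, rfl⟩


section CFC
variable {A : Matrix (Fin n) (Fin n) ℝ}


variable {n : ℕ} {A : Matrix (Fin n) (Fin n) ℝ}

/-- abbreviation for the real unitary conjugation formula for `IsHermitian.cfc` -/
lemma cfcr (hA : A.IsHermitian) (f : ℝ → ℝ) :
    hA.cfc f = (hA.eigenvectorUnitary : Matrix (Fin n) (Fin n) ℝ) *
      diagonal (f ∘ hA.eigenvalues) * star (hA.eigenvectorUnitary : Matrix (Fin n) (Fin n) ℝ) := by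
  rw [Matrix.IsHermitian.cfc, RCLike.ofReal_real_eq_id]
  simp [Function.comp_def]

lemma star_mul_self_unitary (hA : A.IsHermitian) :
    star (hA.eigenvectorUnitary : Matrix (Fin n) (Fin n) ℝ) *
      (hA.eigenvectorUnitary : Matrix (Fin n) (Fin n) ℝ) = 1 :=
  Unitary.star_mul_self_of_mem (SetLike.coe_mem _)

lemma mul_star_self_unitary (hA : A.IsHermitian) :
    (hA.eigenvectorUnitary : Matrix (Fin n) (Fin n) ℝ) *
      star (hA.eigenvectorUnitary : Matrix (Fin n) (Fin n) ℝ) = 1 :=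
  Unitary.mul_star_self_of_mem (SetLike.coe_mem _)

lemma cfc_herm (hA : A.IsHermitian) (f : ℝ → ℝ) : (hA.cfc f).IsHermitian := by
  rw [cfcr, Matrix.star_eq_conjTranspose]
  exact Matrix.isHermitian_mul_mul_conjTranspose _ (Matrix.isHermitian_diagonal _)

lemma cfc_mul_cfc (hA : A.IsHermitian) (f g : ℝ → ℝ) :
    hA.cfc f * hA.cfc g = hA.cfc (fun t => f t * g t) := by
  rw [cfcr, cfcr, cfcr]
  have h := star_mul_self_unitary hA
  calc _ = (hA.eigenvectorUnitary : Matrix (Fin n) (Fin n) ℝ) * diagonal (f ∘ hA.eigenvalues) *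
      ((star (hA.eigenvectorUnitary : Matrix (Fin n) (Fin n) ℝ) *
        (hA.eigenvectorUnitary : Matrix (Fin n) (Fin n) ℝ)) * diagonal (g ∘ hA.eigenvalues)) *
      star (hA.eigenvectorUnitary : Matrix (Fin n) (Fin n) ℝ) := by
        simp only [Matrix.mul_assoc]
    _ = _ := by
        rw [h, Matrix.one_mul, Matrix.mul_assoc _ (diagonal _) (diagonal _),
          diagonal_mul_diagonal]
        simp only [Matrix.mul_assoc]
        rfl

lemma cfc_congr' (hA : A.IsHermitian) {f g : ℝ → ℝ}
    (h : ∀ i, f (hA.eigenvalues i) = g (hA.eigenvalues i)) : hA.cfc f = hA.cfc g := by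
  rw [cfcr, cfcr]
  congr 2
  ext i j
  rcases eq_or_ne i j with rfl | hij
  · simp [h i]
  · simp [diagonal_apply_ne _ hij]

lemma cfc_id' (hA : A.IsHermitian) : hA.cfc (fun t => t) = A := by
  rw [cfcr]
  have := hA.spectral_theorem
  rw [RCLike.ofReal_real_eq_id] at this
  simpa [Function.comp_def] using this.symm

lemma cfc_const_one (hA : A.IsHermitian) : hA.cfc (fun _ => 1) = 1 := by
  rw [cfcr]
  have : diagonal ((fun _ => (1:ℝ)) ∘ hA.eigenvalues) = 1 := by
    simp [diagonal_one, Function.comp_def]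
  rw [this, Matrix.mul_one, mul_star_self_unitary hA]

lemma cfc_const (hA : A.IsHermitian) (c : ℝ) : hA.cfc (fun _ => c) = c • 1 := by
  rw [cfcr]
  have hd : diagonal ((fun _ : ℝ => c) ∘ hA.eigenvalues) = c • (1 : Matrix (Fin n) (Fin n) ℝ) := by
    ext i j
    rcases eq_or_ne i j with rfl | hij
    · simp
    · simp [Matrix.diagonal_apply_ne _ hij, Matrix.one_apply_ne hij]
  rw [hd, Matrix.mul_smul, Matrix.smul_mul, Matrix.mul_one, mul_star_self_unitary hA]

lemma cfc_sub (hA : A.IsHermitian) (f g : ℝ → ℝ) :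
    hA.cfc f - hA.cfc g = hA.cfc (fun t => f t - g t) := by
  rw [cfcr, cfcr, cfcr, ← Matrix.sub_mul, ← Matrix.mul_sub]
  congr 2
  ext i j
  rcases eq_or_ne i j with rfl | hij
  · simp
  · simp [Matrix.diagonal_apply_ne _ hij]

lemma cfc_det (hA : A.IsHermitian) (f : ℝ → ℝ) :
    (hA.cfc f).det = ∏ i, f (hA.eigenvalues i) := by
  rw [cfcr, Matrix.det_mul, Matrix.det_mul, mul_comm, ← mul_assoc, ← Matrix.det_mul,
    star_mul_self_unitary hA]
  simp [det_diagonal, Function.comp_def]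

lemma cfc_trace (hA : A.IsHermitian) (f : ℝ → ℝ) :
    (hA.cfc f).trace = ∑ i, f (hA.eigenvalues i) := by
  rw [cfcr, Matrix.trace_mul_cycle, star_mul_self_unitary hA, Matrix.one_mul, trace_diagonal]
  simp [Function.comp_def]

/-- congruence by an invertible matrix preserves positive definiteness -/
lemma posDef_conj {C M : Matrix (Fin n) (Fin n) ℝ} (hM : M.PosDef) (hC : IsUnit C) :
    (C * M * Cᴴ).PosDef := by
  refine Matrix.PosDef.of_dotProduct_mulVec_pos (Matrix.isHermitian_mul_mul_conjTranspose _ hM.1) fun x hx => ?_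
  have hCH : IsUnit Cᴴ := by
    simpa [Matrix.isUnit_iff_isUnit_det, Matrix.det_conjTranspose] using
      (Matrix.isUnit_iff_isUnit_det _).mp hC
  have hx' : Cᴴ *ᵥ x ≠ 0 := by
    intro h
    exact hx (by simpa using (Matrix.mulVec_injective_iff_isUnit.mpr hCH) (h.trans (Matrix.mulVec_zero _).symm))
  have := hM.dotProduct_mulVec_pos hx'
  simpa only [star_mulVec, dotProduct_mulVec, vecMul_vecMul, conjTranspose_conjTranspose,
    Matrix.mul_assoc] using this

lemma cfc_posDef (hA : A.IsHermitian) (f : ℝ → ℝ)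
    (hf : ∀ i, 0 < f (hA.eigenvalues i)) : (hA.cfc f).PosDef := by
  rw [cfcr]
  have hU : IsUnit (hA.eigenvectorUnitary : Matrix (Fin n) (Fin n) ℝ) :=
    ⟨⟨_, star (hA.eigenvectorUnitary : Matrix (Fin n) (Fin n) ℝ),
      mul_star_self_unitary hA, star_mul_self_unitary hA⟩, rfl⟩
  have hd : (diagonal ((f ∘ hA.eigenvalues))).PosDef :=
    Matrix.posDef_diagonal_iff.mpr (fun i => hf i)
  have := posDef_conj hd hU
  rwa [← Matrix.star_eq_conjTranspose] at this

lemma cfc_posSemidef (hA : A.IsHermitian) (f : ℝ → ℝ)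
    (hf : ∀ i, 0 ≤ f (hA.eigenvalues i)) : (hA.cfc f).PosSemidef := by
  rw [cfcr]
  have hd : (diagonal ((f ∘ hA.eigenvalues))).PosSemidef :=
    Matrix.posSemidef_diagonal_iff.mpr (fun i => hf i)
  have := hd.mul_mul_conjTranspose_same (hA.eigenvectorUnitary : Matrix (Fin n) (Fin n) ℝ)
  rwa [← Matrix.star_eq_conjTranspose] at this

/-- key step: the multiset of eigenvalues of `U * diagonal d * star U` is `d`'s multiset. -/
lemma eig_mset_of_conj_diagonal {d : Fin n → ℝ} {U : Matrix (Fin n) (Fin n) ℝ}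
    (hU : U * star U = 1) (hU' : star U * U = 1)
    {B : Matrix (Fin n) (Fin n) ℝ} (hB : B.IsHermitian)
    (hBU : B = U * diagonal d * star U) :
    mset hB.eigenvalues = mset d := by
  -- characteristic polynomial comparison
  have key : ∀ x : ℝ, ∏ i, (x - hB.eigenvalues i) = ∏ i, (x - d i) := by
    intro x
    have h1 : diagonal (fun _ : Fin n => x) - B =
        U * (diagonal (fun i => x - d i)) * star U := by
      have : diagonal (fun _ : Fin n => x) = U * diagonal (fun _ : Fin n => x) * star U := by
        have hc : diagonal (fun _ : Fin n => x) = x • (1 : Matrix (Fin n) (Fin n) ℝ) := by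
          ext i j
          rcases eq_or_ne i j with rfl | hij
          · simp
          · simp [Matrix.diagonal_apply_ne _ hij, Matrix.one_apply_ne hij]
        rw [hc, Matrix.mul_smul, Matrix.smul_mul, Matrix.mul_one, hU]
      rw [hBU]
      nth_rewrite 1 [this]
      rw [← Matrix.sub_mul, ← Matrix.mul_sub]
      congr 2
      ext i j
      rcases eq_or_ne i j with rfl | hij
      · simp
      · simp [Matrix.diagonal_apply_ne _ hij]
    have h2 : diagonal (fun _ : Fin n => x) - B =
        (hB.eigenvectorUnitary : Matrix (Fin n) (Fin n) ℝ) *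
          (diagonal (fun i => x - hB.eigenvalues i)) *
          star (hB.eigenvectorUnitary : Matrix (Fin n) (Fin n) ℝ) := by
      have hsp := hB.spectral_theorem
      rw [RCLike.ofReal_real_eq_id] at hsp
      simp only [Function.comp_def, id, Unitary.conjStarAlgAut_apply] at hsp
      have : diagonal (fun _ : Fin n => x) =
          (hB.eigenvectorUnitary : Matrix (Fin n) (Fin n) ℝ) * diagonal (fun _ : Fin n => x) *
            star (hB.eigenvectorUnitary : Matrix (Fin n) (Fin n) ℝ) := by
        have hc : diagonal (fun _ : Fin n => x) = x • (1 : Matrix (Fin n) (Fin n) ℝ) := by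
          ext i j
          rcases eq_or_ne i j with rfl | hij
          · simp
          · simp [Matrix.diagonal_apply_ne _ hij, Matrix.one_apply_ne hij]
        rw [hc, Matrix.mul_smul, Matrix.smul_mul, Matrix.mul_one, mul_star_self_unitary hB]
      have expand : (hB.eigenvectorUnitary : Matrix (Fin n) (Fin n) ℝ) *
          (diagonal (fun i => x - hB.eigenvalues i)) *
          star (hB.eigenvectorUnitary : Matrix (Fin n) (Fin n) ℝ) =
          (hB.eigenvectorUnitary : Matrix (Fin n) (Fin n) ℝ) * diagonal (fun _ : Fin n => x) *
            star (hB.eigenvectorUnitary : Matrix (Fin n) (Fin n) ℝ) -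
          (hB.eigenvectorUnitary : Matrix (Fin n) (Fin n) ℝ) * diagonal hB.eigenvalues *
            star (hB.eigenvectorUnitary : Matrix (Fin n) (Fin n) ℝ) := by
        rw [← Matrix.sub_mul, ← Matrix.mul_sub]
        congr 2
        ext i j
        rcases eq_or_ne i j with rfl | hij
        · simp
        · simp [Matrix.diagonal_apply_ne _ hij]
      rw [expand, ← this, ← hsp]
    have d1 : (diagonal (fun _ : Fin n => x) - B).det = ∏ i, (x - d i) := by
      rw [h1, Matrix.det_mul, Matrix.det_mul, mul_comm, ← mul_assoc, ← Matrix.det_mul, hU']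
      simp [det_diagonal]
    have d2 : (diagonal (fun _ : Fin n => x) - B).det = ∏ i, (x - hB.eigenvalues i) := by
      rw [h2, Matrix.det_mul, Matrix.det_mul, mul_comm, ← mul_assoc, ← Matrix.det_mul,
        star_mul_self_unitary hB]
      simp [det_diagonal]
    rw [← d1, ← d2]
  -- polynomial identity
  have hpoly : (Multiset.map (fun a => X - C a) (mset hB.eigenvalues)).prod =
      (Multiset.map (fun a => X - C a) (mset d)).prod := by
    apply Polynomial.funext
    intro x
    have e1 : ∀ (u : Fin n → ℝ), Polynomial.eval x
        (Multiset.map (fun a => X - C a) (mset u)).prod = ∏ i, (x - u i) := by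
      intro u
      rw [Polynomial.eval_multiset_prod, mset, Multiset.map_map, Multiset.map_map,
        Finset.prod_eq_multiset_prod]
      exact congrArg Multiset.prod (Multiset.map_congr rfl (by intro i _; simp))
    rw [e1, e1, key x]
  have := congrArg Polynomial.roots hpoly
  rwa [Polynomial.roots_multiset_prod_X_sub_C, Polynomial.roots_multiset_prod_X_sub_C] at this


lemma sortAsc_pos {u : Fin n → ℝ} (hu : ∀ i, 0 < u i) (i : Fin n) : 0 < sortAsc u i := hu _

lemma eigDesc_antitone (hA : A.IsHermitian) : Antitone (eigDesc hA) :=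
  antitone_sortDesc hA.eigenvalues

lemma eigDesc_pos (hA : A.PosDef) (i : Fin n) : 0 < eigDesc hA.1 i := hA.eigenvalues_pos _

lemma det_eq_prod_eigDesc (hA : A.IsHermitian) : A.det = ∏ i, eigDesc hA i := by
  have h1 := hA.det_eq_prod_eigenvalues
  have h2 := prod_comp_sortDesc hA.eigenvalues (fun t => t)
  simp only [RCLike.ofReal_real_eq_id, id_eq] at h1
  rw [h1, ← h2]
  rfl

lemma cfc_trace_eigDesc (hA : A.IsHermitian) (f : ℝ → ℝ) :
    (hA.cfc f).trace = ∑ i, f (eigDesc hA i) := by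
  rw [cfc_trace, ← sum_comp_sortDesc hA.eigenvalues f]
  rfl

lemma inv_eq_cfc (hA : A.PosDef) : A⁻¹ = hA.1.cfc (fun t => t⁻¹) := by
  refine (Matrix.inv_eq_left_inv ?_)
  calc hA.1.cfc (fun t => t⁻¹) * A = hA.1.cfc (fun t => t⁻¹) * hA.1.cfc (fun t => t) := by
        rw [cfc_id']
    _ = hA.1.cfc (fun t => t⁻¹ * t) := cfc_mul_cfc hA.1 _ _
    _ = hA.1.cfc (fun _ => 1) := cfc_congr' hA.1 (fun i => by
        field_simp [(hA.eigenvalues_pos i).ne'])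
    _ = 1 := cfc_const_one hA.1

lemma eigDesc_inv (hA : A.PosDef) (h : (A⁻¹).IsHermitian) (i : Fin n) :
    eigDesc h i = (eigDesc hA.1 i.rev)⁻¹ := by
  have hev := hA.eigenvalues_pos
  have hmset : mset h.eigenvalues = mset (fun i => (hA.1.eigenvalues i)⁻¹) := by
    refine eig_mset_of_conj_diagonal (mul_star_self_unitary hA.1)
      (star_mul_self_unitary hA.1) h ?_
    rw [inv_eq_cfc hA, cfcr]
    rfl
  have hsort : sortDesc h.eigenvalues = sortDesc (fun i => (hA.1.eigenvalues i)⁻¹) :=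
    sortDesc_eq_of_mset hmset
  -- identify the sorted inverse tuple
  have hC : sortAsc (fun i => (hA.1.eigenvalues i)⁻¹) =
      fun j => (sortAsc hA.1.eigenvalues j.rev)⁻¹ := by
    refine monotone_unique (monotone_sortAsc _) ?_ ?_
    · intro j j' hj
      have h1 : sortAsc hA.1.eigenvalues j'.rev ≤ sortAsc hA.1.eigenvalues j.rev :=
        monotone_sortAsc _ (by simpa [Fin.rev_le_rev] using hj)
      exact inv_anti₀ (sortAsc_pos hev _) h1
    · have e1 : mset (sortAsc (fun i => (hA.1.eigenvalues i)⁻¹)) =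
          mset (fun i => (hA.1.eigenvalues i)⁻¹) := mset_comp_perm _ _
      have e2 : mset (fun j : Fin n => (sortAsc hA.1.eigenvalues j.rev)⁻¹) =
          mset (fun i => (hA.1.eigenvalues i)⁻¹) := by
        have : (fun j : Fin n => (sortAsc hA.1.eigenvalues j.rev)⁻¹) =
            (fun i => (hA.1.eigenvalues i)⁻¹) ∘ ((Fin.revPerm).trans (Tuple.sort hA.1.eigenvalues)) := rfl
        rw [this, mset_comp_perm]
      rw [e1, e2]
  show sortDesc h.eigenvalues i = _
  rw [hsort]
  show sortAsc (fun i => (hA.1.eigenvalues i)⁻¹) i.rev = _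
  rw [hC]
  have : eigDesc hA.1 i.rev = sortAsc hA.1.eigenvalues i := by
    show sortAsc _ i.rev.rev = _
    rw [Fin.rev_rev]
  rw [this]
  simp only [Fin.rev_rev]


end CFC

section CF
variable {X Y : Matrix (Fin n) (Fin n) ℝ}
lemma eigDesc_apply (hX : X.IsHermitian) (m : Fin n) :
    eigDesc hX m = hX.eigenvalues (sortPermD hX.eigenvalues m) := rfl

lemma eigDesc_antitone' (hX : X.IsHermitian) : Antitone (eigDesc hX) :=
  antitone_sortDesc hX.eigenvalues

/-- helper: dot product with a finite sum -/
lemma dotProduct_sum' {ι : Type*} (s : Finset ι) (v : Fin n → ℝ) (w : ι → Fin n → ℝ) :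
    v ⬝ᵥ (∑ j ∈ s, w j) = ∑ j ∈ s, v ⬝ᵥ w j := by
  unfold dotProduct
  rw [Finset.sum_comm]
  congr 1
  funext k
  rw [Finset.sum_apply, Finset.mul_sum]

lemma mulVec_sum' {ι : Type*} (s : Finset ι) (M : Matrix (Fin n) (Fin n) ℝ) (w : ι → Fin n → ℝ) :
    M *ᵥ (∑ j ∈ s, w j) = ∑ j ∈ s, M *ᵥ w j := by
  simpa only [Matrix.mulVecLin_apply] using map_sum M.mulVecLin w s

/-- the j-th eigenvector of a Hermitian real matrix, as a plain vector -/
noncomputable def Evec (hX : X.IsHermitian) (j : Fin n) : Fin n → ℝ :=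
  fun k => (hX.eigenvectorUnitary : Matrix (Fin n) (Fin n) ℝ) k j

lemma Evec_dot (hX : X.IsHermitian) (i j : Fin n) :
    Evec hX i ⬝ᵥ Evec hX j = if i = j then 1 else 0 := by
  have h := congrFun (congrFun (star_mul_self_unitary hX) i) j
  simp only [Matrix.mul_apply, Matrix.star_apply, star_trivial] at h
  rw [show ((1 : Matrix (Fin n) (Fin n) ℝ) i j) = if i = j then 1 else 0 from Matrix.one_apply] at h
  exact h

lemma Evec_mulVec (hX : X.IsHermitian) (j : Fin n) :
    X *ᵥ Evec hX j = hX.eigenvalues j • Evec hX j := by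
  have hb : Evec hX j = (WithLp.equiv 2 ((i : Fin n) → ℝ)) (hX.eigenvectorBasis j) := by
    funext k
    exact hX.eigenvectorUnitary_apply k j
  rw [hb]
  exact hX.mulVec_eigenvectorBasis j

lemma Evec_expand (hX : X.IsHermitian) (v : Fin n → ℝ) :
    ∑ j, (Evec hX j ⬝ᵥ v) • Evec hX j = v := by
  have hUU : (hX.eigenvectorUnitary : Matrix (Fin n) (Fin n) ℝ) *
      star (hX.eigenvectorUnitary : Matrix (Fin n) (Fin n) ℝ) = 1 :=
    mul_eq_one_comm.mp (star_mul_self_unitary hX)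
  funext k
  rw [Finset.sum_apply]
  have step : ∀ j, ((Evec hX j ⬝ᵥ v) • Evec hX j) k = ∑ l, (Evec hX j l * v l) * Evec hX j k := by
    intro j
    rw [Pi.smul_apply, smul_eq_mul, dotProduct, Finset.sum_mul]
  simp only [step]
  rw [Finset.sum_comm]
  have : ∀ l, ∑ j, (Evec hX j l * v l) * Evec hX j k =
      ((1 : Matrix (Fin n) (Fin n) ℝ) k l) * v l := by
    intro l
    have h := congrFun (congrFun hUU k) l
    simp only [Matrix.mul_apply, Matrix.star_apply, star_trivial] at h
    rw [← h, Finset.sum_mul]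
    congr 1
    funext j
    show Evec hX j l * v l * Evec hX j k = _
    simp only [Evec]
    ring
  simp only [this]
  simp [Matrix.one_apply]

lemma quad_expand (hX : X.IsHermitian) (v : Fin n → ℝ) :
    v ⬝ᵥ (X *ᵥ v) = ∑ j, hX.eigenvalues j * (Evec hX j ⬝ᵥ v) ^ 2 := by
  nth_rewrite 2 [← Evec_expand hX v]
  rw [mulVec_sum', dotProduct_sum']
  congr 1
  funext j
  rw [Matrix.mulVec_smul]
  rw [Evec_mulVec hX j]
  rw [dotProduct_smul, dotProduct_smul]
  rw [dotProduct_comm v (Evec hX j)]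
  simp only [smul_eq_mul]
  ring

lemma norm_expand (hX : X.IsHermitian) (v : Fin n → ℝ) :
    v ⬝ᵥ v = ∑ j, (Evec hX j ⬝ᵥ v) ^ 2 := by
  nth_rewrite 2 [← Evec_expand hX v]
  rw [dotProduct_sum']
  congr 1
  funext j
  rw [dotProduct_smul, dotProduct_comm v (Evec hX j)]
  simp only [smul_eq_mul]
  ring

lemma coeff_zero (hX : X.IsHermitian) (S : Finset (Fin n)) (v : Fin n → ℝ)
    (hv : v ∈ Submodule.span ℝ (Evec hX '' (S : Set (Fin n)))) {j : Fin n} (hj : j ∉ S) :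
    Evec hX j ⬝ᵥ v = 0 := by
  induction hv using Submodule.span_induction with
  | mem x hx =>
      obtain ⟨s, hs, rfl⟩ := hx
      rw [Evec_dot]
      have : j ≠ s := fun h => hj (h ▸ hs)
      simp [this]
  | zero => simp
  | add x y hx hy ihx ihy => rw [dotProduct_add, ihx, ihy]; ring
  | smul a x hx ih => rw [dotProduct_smul, ih]; simp

lemma linearIndependent_Evec (hX : X.IsHermitian) : LinearIndependent ℝ (Evec hX) := by
  rw [linearIndependent_iff']
  intro s g hsum i hi
  have := congrArg (fun w => Evec hX i ⬝ᵥ w) hsum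
  rw [dotProduct_sum', dotProduct_zero] at this
  have hterm : ∀ j ∈ s, Evec hX i ⬝ᵥ g j • Evec hX j = if i = j then g j else 0 := by
    intro j _
    rw [dotProduct_smul, Evec_dot]
    by_cases h : i = j <;> simp [h]
  rw [Finset.sum_congr rfl hterm] at this
  simpa [Finset.sum_ite_eq' s, hi] using this

lemma finrank_span_Evec (hX : X.IsHermitian) (S : Finset (Fin n)) :
    Module.finrank ℝ (Submodule.span ℝ (Evec hX '' (S : Set (Fin n)))) = S.card := by
  rw [Set.image_eq_range]
  have hli : LinearIndependent ℝ (fun s : {x // x ∈ S} => Evec hX s) :=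
    (linearIndependent_Evec hX).comp _ Subtype.val_injective
  exact (finrank_span_eq_card hli).trans (Fintype.card_coe S)

lemma quad_ge_on_span (hX : X.IsHermitian) (S : Finset (Fin n)) (θ : ℝ)
    (hθ : ∀ j ∈ S, θ ≤ hX.eigenvalues j) (v : Fin n → ℝ)
    (hv : v ∈ Submodule.span ℝ (Evec hX '' (S : Set (Fin n)))) :
    θ * (v ⬝ᵥ v) ≤ v ⬝ᵥ (X *ᵥ v) := by
  rw [quad_expand hX, norm_expand hX, Finset.mul_sum]
  apply Finset.sum_le_sum
  intro j _
  by_cases hj : j ∈ S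
  · exact mul_le_mul_of_nonneg_right (hθ j hj) (sq_nonneg _)
  · rw [coeff_zero hX S v hv hj]
    simp

lemma quad_le_on_span (hX : X.IsHermitian) (S : Finset (Fin n)) (θ : ℝ)
    (hθ : ∀ j ∈ S, hX.eigenvalues j ≤ θ) (v : Fin n → ℝ)
    (hv : v ∈ Submodule.span ℝ (Evec hX '' (S : Set (Fin n)))) :
    v ⬝ᵥ (X *ᵥ v) ≤ θ * (v ⬝ᵥ v) := by
  rw [quad_expand hX, norm_expand hX, Finset.mul_sum]
  apply Finset.sum_le_sum
  intro j _
  by_cases hj : j ∈ S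
  · exact mul_le_mul_of_nonneg_right (hθ j hj) (sq_nonneg _)
  · rw [coeff_zero hX S v hv hj]
    simp

lemma dot_self_pos {v : Fin n → ℝ} (hv : v ≠ 0) : 0 < v ⬝ᵥ v := by
  obtain ⟨k, hk⟩ : ∃ k, v k ≠ 0 := by
    by_contra h
    push_neg at h
    exact hv (funext h)
  unfold dotProduct
  apply Finset.sum_pos' (fun i _ => mul_self_nonneg _)
  exact ⟨k, Finset.mem_univ k, mul_self_pos.mpr hk⟩

/-- the key Courant-Fischer-type comparison lemma -/
lemma eigDesc_le_eigDesc (hX : X.IsHermitian) (hY : Y.IsHermitian) {c : ℝ} (hc : 0 ≤ c)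
    (h : ∀ v : Fin n → ℝ, c * (v ⬝ᵥ (X *ᵥ v)) ≤ v ⬝ᵥ (Y *ᵥ v)) (i : Fin n) :
    c * eigDesc hX i ≤ eigDesc hY i := by
  set σX := sortPermD hX.eigenvalues
  set σY := sortPermD hY.eigenvalues
  set S1 : Finset (Fin n) := (Finset.Iic i).image σX with hS1
  set S2 : Finset (Fin n) := (Finset.Ici i).image σY with hS2
  have hcard1 : S1.card = (i : ℕ) + 1 := by
    rw [hS1, Finset.card_image_of_injective _ σX.injective, Fin.card_Iic]
  have hcard2 : S2.card = n - (i : ℕ) := by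
    rw [hS2, Finset.card_image_of_injective _ σY.injective, Fin.card_Ici]
  set V := Submodule.span ℝ (Evec hX '' (S1 : Set (Fin n)))
  set W := Submodule.span ℝ (Evec hY '' (S2 : Set (Fin n)))
  have hV : Module.finrank ℝ V = (i : ℕ) + 1 := by rw [finrank_span_Evec hX S1, hcard1]
  have hW : Module.finrank ℝ W = n - (i : ℕ) := by rw [finrank_span_Evec hY S2, hcard2]
  -- intersection is nontrivial
  have hsum : Module.finrank ℝ (V ⊔ W : Submodule ℝ (Fin n → ℝ)) +
      Module.finrank ℝ (V ⊓ W : Submodule ℝ (Fin n → ℝ)) =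
      Module.finrank ℝ V + Module.finrank ℝ W := Submodule.finrank_sup_add_finrank_inf_eq V W
  have hle : Module.finrank ℝ (V ⊔ W : Submodule ℝ (Fin n → ℝ)) ≤ n := by
    have := Submodule.finrank_le (V ⊔ W : Submodule ℝ (Fin n → ℝ))
    rwa [Module.finrank_fin_fun] at this
  have hpos : 0 < Module.finrank ℝ (V ⊓ W : Submodule ℝ (Fin n → ℝ)) := by
    have hi : (i : ℕ) < n := i.isLt
    omega
  obtain ⟨v, hvmem, hvne⟩ : ∃ v : Fin n → ℝ, v ∈ (V ⊓ W : Submodule ℝ (Fin n → ℝ)) ∧ v ≠ 0 := by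
    have : Nontrivial (V ⊓ W : Submodule ℝ (Fin n → ℝ)) := Module.finrank_pos_iff.mp hpos
    obtain ⟨⟨v, hv⟩, hne⟩ := exists_ne (0 : (V ⊓ W : Submodule ℝ (Fin n → ℝ)))
    exact ⟨v, hv, fun h => hne (Subtype.ext h)⟩
  have hv1 : v ∈ V := hvmem.1
  have hv2 : v ∈ W := hvmem.2
  -- quadratic form bounds
  have hq1 : eigDesc hX i * (v ⬝ᵥ v) ≤ v ⬝ᵥ (X *ᵥ v) := by
    apply quad_ge_on_span hX S1 _ _ v hv1
    intro j hj
    rw [hS1] at hj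
    obtain ⟨m, hm, rfl⟩ := Finset.mem_image.mp hj
    rw [Finset.mem_Iic] at hm
    exact eigDesc_antitone' hX hm
  have hq2 : v ⬝ᵥ (Y *ᵥ v) ≤ eigDesc hY i * (v ⬝ᵥ v) := by
    apply quad_le_on_span hY S2 _ _ v hv2
    intro j hj
    rw [hS2] at hj
    obtain ⟨m, hm, rfl⟩ := Finset.mem_image.mp hj
    rw [Finset.mem_Ici] at hm
    exact eigDesc_antitone' hY hm
  have hchain : (c * eigDesc hX i) * (v ⬝ᵥ v) ≤ eigDesc hY i * (v ⬝ᵥ v) := by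
    calc (c * eigDesc hX i) * (v ⬝ᵥ v) = c * (eigDesc hX i * (v ⬝ᵥ v)) := by ring
      _ ≤ c * (v ⬝ᵥ (X *ᵥ v)) := mul_le_mul_of_nonneg_left hq1 hc
      _ ≤ v ⬝ᵥ (Y *ᵥ v) := h v
      _ ≤ eigDesc hY i * (v ⬝ᵥ v) := hq2
  exact le_of_mul_le_mul_right hchain (dot_self_pos hvne)


end CF
lemma eigDesc_antitone'' {A : Matrix (Fin n) (Fin n) ℝ} (hA : A.IsHermitian) :
    Antitone (eigDesc hA) := antitone_sortDesc hA.eigenvalues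

/-- quadratic-form comparison from a psd difference -/
lemma quad_le_of_sub_psd {P Q : Matrix (Fin n) (Fin n) ℝ} (h : (Q - P).PosSemidef)
    (v : Fin n → ℝ) : v ⬝ᵥ (P *ᵥ v) ≤ v ⬝ᵥ (Q *ᵥ v) := by
  have := h.dotProduct_mulVec_nonneg v
  rw [star_trivial, Matrix.sub_mulVec, dotProduct_sub] at this
  linarith

/-- **Multiplicative Lidskii inequality** -/
lemma lidskii {X Y W Z : Matrix (Fin n) (Fin n) ℝ} (hX : X.PosDef) (hY : Y.PosDef)
    (hZ : Z.PosDef) (hW : W.IsHermitian) (hWW : W * W = X) (hZf : Z = W * Y * W)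
    (S : Finset (Fin n)) :
    ∑ i ∈ S, (Real.log (eigDesc hZ.1 i) - Real.log (eigDesc hX.1 i)) ≤
      ∑ j ∈ Finset.univ.filter (fun j : Fin n => (j : ℕ) < S.card), Real.log (eigDesc hY.1 j) := by
  set k := S.card with hk
  rcases Nat.eq_zero_or_pos k with hk0 | hkpos
  · have hS : S = ∅ := Finset.card_eq_zero.mp (hk ▸ hk0)
    have hf : Finset.univ.filter (fun j : Fin n => (j : ℕ) < k) = ∅ := by
      apply Finset.filter_false_of_mem
      intro j _
      omega
    rw [hS, hf]
    simp
  have hkn : k ≤ n := by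
    have := Finset.card_le_univ S
    simpa [← hk] using this
  have hn : 0 < n := lt_of_lt_of_le hkpos hkn
  have hk1n : k - 1 < n := by omega
  set i₀ : Fin n := ⟨k - 1, hk1n⟩ with hi₀
  set t := eigDesc hY.1 i₀ with htdef
  have ht : 0 < t := eigDesc_pos hY i₀
  set Yh := hY.1.cfc (fun s => max s t) with hYh
  have hYhherm : Yh.IsHermitian := cfc_herm hY.1 _
  set Zh := W * Yh * W with hZh
  have hZhherm : Zh.IsHermitian := by
    have : Zh = W * Yh * Wᴴ := by rw [hZh, hW.eq]
    rw [this]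
    exact Matrix.isHermitian_mul_mul_conjTranspose W hYhherm
  -- psd facts
  have psd1 : (Yh - Y).PosSemidef := by
    have e : Yh - Y = hY.1.cfc (fun s => max s t - s) := by
      calc Yh - Y = hY.1.cfc (fun s => max s t) - hY.1.cfc (fun s => s) := by rw [cfc_id']
        _ = _ := cfc_sub hY.1 _ _
    rw [e]
    exact cfc_posSemidef hY.1 _ (fun i => sub_nonneg.mpr (le_max_left _ _))
  have psd2 : (Yh - t • 1).PosSemidef := by
    have e : Yh - t • 1 = hY.1.cfc (fun s => max s t - t) := by
      calc Yh - t • 1 = hY.1.cfc (fun s => max s t) - hY.1.cfc (fun _ => t) := by rw [cfc_const]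
        _ = _ := cfc_sub hY.1 _ _
    rw [e]
    exact cfc_posSemidef hY.1 _ (fun i => sub_nonneg.mpr (le_max_right _ _))
  have cong1 : (Zh - Z).PosSemidef := by
    have e : Zh - Z = Wᴴ * (Yh - Y) * W := by
      rw [hW.eq, hZh, hZf, Matrix.mul_sub, Matrix.sub_mul]
    rw [e]
    exact psd1.conjTranspose_mul_mul_same W
  have cong2 : (Zh - t • X).PosSemidef := by
    have e : Zh - t • X = Wᴴ * (Yh - t • 1) * W := by
      rw [hW.eq, hZh, Matrix.mul_sub, Matrix.sub_mul]
      congr 1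
      rw [Matrix.mul_smul, Matrix.smul_mul, Matrix.mul_one, hWW]
    rw [e]
    exact psd2.conjTranspose_mul_mul_same W
  -- eigenvalue comparisons
  have m1 : ∀ i, eigDesc hZ.1 i ≤ eigDesc hZhherm i := by
    intro i
    have := eigDesc_le_eigDesc hZ.1 hZhherm (c := 1) zero_le_one
      (fun v => by rw [one_mul]; exact quad_le_of_sub_psd cong1 v) i
    linarith
  have m2 : ∀ i, t * eigDesc hX.1 i ≤ eigDesc hZhherm i := by
    intro i
    refine eigDesc_le_eigDesc hX.1 hZhherm ht.le (fun v => ?_) i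
    have h0 := quad_le_of_sub_psd cong2 v
    rwa [Matrix.smul_mulVec, dotProduct_smul, smul_eq_mul] at h0
  have hZhpos : ∀ i, 0 < eigDesc hZhherm i :=
    fun i => lt_of_lt_of_le (mul_pos ht (eigDesc_pos hX i)) (m2 i)
  -- determinant identities
  have detZh : Zh.det = X.det * Yh.det := by
    rw [hZh, Matrix.det_mul, Matrix.det_mul, ← hWW, Matrix.det_mul]
    ring
  have detYh : Yh.det = ∏ j, max (eigDesc hY.1 j) t := by
    rw [hYh, cfc_det]
    exact (prod_comp_sortDesc hY.1.eigenvalues (fun s => max s t)).symm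
  have hival : (i₀ : ℕ) = k - 1 := rfl
  have hfilter : Finset.univ.filter (fun j : Fin n => (j : ℕ) < k) = Finset.Iic i₀ := by
    ext j
    simp only [Finset.mem_filter, Finset.mem_univ, true_and, Finset.mem_Iic, Fin.le_def]
    omega
  have hsplit : ∏ j, max (eigDesc hY.1 j) t =
      (∏ j ∈ Finset.univ.filter (fun j : Fin n => (j : ℕ) < k), eigDesc hY.1 j) * t ^ (n - k) := by
    rw [← Finset.prod_filter_mul_prod_filter_not Finset.univ (fun j : Fin n => (j : ℕ) < k)]
    congr 1
    · apply Finset.prod_congr rfl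
      intro j hj
      rw [Finset.mem_filter] at hj
      refine max_eq_left ?_
      rw [htdef]
      refine eigDesc_antitone'' hY.1 ?_
      rw [Fin.le_def]
      omega
    · have hconst : ∀ j ∈ Finset.univ.filter (fun j : Fin n => ¬ ((j : ℕ) < k)),
          max (eigDesc hY.1 j) t = t := by
        intro j hj
        rw [Finset.mem_filter] at hj
        refine max_eq_right ?_
        rw [htdef]
        refine eigDesc_antitone'' hY.1 ?_
        rw [Fin.le_def]
        omega
      rw [Finset.prod_congr rfl hconst, Finset.prod_const]
      congr 1
      have : (Finset.univ.filter (fun j : Fin n => ¬ ((j : ℕ) < k))).card =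
          n - (Finset.univ.filter (fun j : Fin n => (j : ℕ) < k)).card := by
        rw [Finset.filter_not, Finset.card_sdiff_of_subset (Finset.filter_subset _ _)]
        simp
      rw [this, hfilter, Fin.card_Iic]
      omega
  have hcardfilter : (Finset.univ.filter (fun j : Fin n => (j : ℕ) < k)).card = k := by
    rw [hfilter, Fin.card_Iic]
    omega
  -- logarithm computations
  have hXpos := fun i => eigDesc_pos hX (i : Fin n)
  have hYpos := fun i => eigDesc_pos hY (i : Fin n)
  have hZpos := fun i => eigDesc_pos hZ (i : Fin n)
  have sum_univ : ∑ i, (Real.log (eigDesc hZhherm i) - Real.log (eigDesc hX.1 i) - Real.log t) =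
      (∑ j ∈ Finset.univ.filter (fun j : Fin n => (j : ℕ) < k), Real.log (eigDesc hY.1 j))
        - k * Real.log t := by
    have l1 : ∑ i, Real.log (eigDesc hZhherm i) = Real.log Zh.det := by
      rw [det_eq_prod_eigDesc hZhherm, Real.log_prod]
      exact fun i _ => (hZhpos i).ne'
    have l2 : ∑ i, Real.log (eigDesc hX.1 i) = Real.log X.det := by
      rw [det_eq_prod_eigDesc hX.1, Real.log_prod]
      exact fun i _ => (hXpos i).ne'
    have l3 : Real.log Zh.det = Real.log X.det +
        ((∑ j ∈ Finset.univ.filter (fun j : Fin n => (j : ℕ) < k), Real.log (eigDesc hY.1 j))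
          + (n - k : ℕ) * Real.log t) := by
      rw [detZh, Real.log_mul (hX.det_pos.ne') , detYh, hsplit, Real.log_mul, Real.log_prod,
        Real.log_pow]
      · exact fun j hj => (hYpos j).ne'
      · exact Finset.prod_pos (fun j hj => hYpos j) |>.ne'
      · exact (pow_pos ht _).ne'
      · rw [detYh, hsplit]
        exact (mul_pos (Finset.prod_pos (fun j hj => hYpos j)) (pow_pos ht _)).ne'
    rw [Finset.sum_sub_distrib, Finset.sum_sub_distrib, l1, l2, l3, Finset.sum_const,
      Finset.card_univ, Fintype.card_fin]
    have : ((n - k : ℕ) : ℝ) = (n : ℝ) - (k : ℝ) := by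
      rw [Nat.cast_sub hkn]
    rw [this]
    push_cast
    ring
  -- the chain
  have step1 : ∑ i ∈ S, (Real.log (eigDesc hZ.1 i) - Real.log (eigDesc hX.1 i) - Real.log t) ≤
      ∑ i ∈ S, (Real.log (eigDesc hZhherm i) - Real.log (eigDesc hX.1 i) - Real.log t) := by
    apply Finset.sum_le_sum
    intro i _
    have := Real.log_le_log (hZpos i) (m1 i)
    linarith
  have step2 : ∑ i ∈ S, (Real.log (eigDesc hZhherm i) - Real.log (eigDesc hX.1 i) - Real.log t) ≤
      ∑ i, (Real.log (eigDesc hZhherm i) - Real.log (eigDesc hX.1 i) - Real.log t) := by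
    apply Finset.sum_le_sum_of_subset_of_nonneg (Finset.subset_univ S)
    intro i _ _
    have h1 : Real.log (t * eigDesc hX.1 i) ≤ Real.log (eigDesc hZhherm i) :=
      Real.log_le_log (mul_pos ht (hXpos i)) (m2 i)
    rw [Real.log_mul ht.ne' (hXpos i).ne'] at h1
    linarith
  have hsum_S : ∑ i ∈ S, (Real.log (eigDesc hZ.1 i) - Real.log (eigDesc hX.1 i)) =
      (∑ i ∈ S, (Real.log (eigDesc hZ.1 i) - Real.log (eigDesc hX.1 i) - Real.log t))
        + k * Real.log t := by
    have e1 : ∑ i ∈ S, (Real.log (eigDesc hZ.1 i) - Real.log (eigDesc hX.1 i)) =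
        ∑ i ∈ S, ((Real.log (eigDesc hZ.1 i) - Real.log (eigDesc hX.1 i) - Real.log t)
          + Real.log t) := by
      apply Finset.sum_congr rfl
      intro i _
      ring
    rw [e1, Finset.sum_add_distrib, Finset.sum_const, ← hk, nsmul_eq_mul]
  rw [hsum_S]
  have := le_trans step1 (le_trans step2 (le_of_eq sum_univ))
  linarith


variable {n : ℕ}

/-- prefix sum of the first `k` coordinates -/
noncomputable def pref (w : Fin n → ℝ) (k : ℕ) : ℝ :=
  ∑ j ∈ Finset.univ.filter (fun j : Fin n => (j : ℕ) < k), w j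

lemma pref_zero (w : Fin n → ℝ) : pref w 0 = 0 := by
  unfold pref
  rw [Finset.filter_false_of_mem (fun j _ => by omega)]
  simp

lemma filter_succ_eq {k : ℕ} (hk : k < n) :
    Finset.univ.filter (fun j : Fin n => (j : ℕ) < k + 1) =
      insert ⟨k, hk⟩ (Finset.univ.filter (fun j : Fin n => (j : ℕ) < k)) := by
  ext j
  simp only [Finset.mem_filter, Finset.mem_univ, true_and, Finset.mem_insert, Fin.ext_iff]
  omega

lemma pref_succ (w : Fin n → ℝ) {k : ℕ} (hk : k < n) :
    pref w (k + 1) = pref w k + w ⟨k, hk⟩ := by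
  unfold pref
  rw [filter_succ_eq hk, Finset.sum_insert (by simp)]
  ring

lemma pref_top (w : Fin n → ℝ) : pref w n = ∑ j, w j := by
  unfold pref
  rw [Finset.filter_true_of_mem (fun j _ => j.isLt)]

/-- for an antitone tuple, subsets sums are dominated by prefix sums -/
lemma sum_le_pref {w : Fin n → ℝ} (hw : Antitone w) (S : Finset (Fin n)) :
    ∑ i ∈ S, w i ≤ pref w S.card := by
  suffices H : ∀ k (S : Finset (Fin n)), S.card = k → ∑ i ∈ S, w i ≤ pref w k by
    simpa using H S.card S rfl
  intro k
  induction k with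
  | zero =>
      intro S hCard
      rw [Finset.card_eq_zero.mp hCard]
      simp [pref_zero]
  | succ k ih =>
      intro S hCard
      have hne : S.Nonempty := by
        rw [← Finset.card_pos, hCard]; omega
      set m := S.max' hne with hm
      have hmS : m ∈ S := S.max'_mem hne
      have hcard' : (S.erase m).card = k := by
        rw [Finset.card_erase_of_mem hmS, hCard]
        omega
      have hkn : k < n := by
        have h1 : S.card ≤ n := by
          simpa using Finset.card_le_univ S
        omega
      have hmk : k ≤ (m : ℕ) := by
        have hsub : S ⊆ Finset.Iic m := fun x hx => Finset.mem_Iic.mpr (S.le_max' x hx)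
        have := Finset.card_le_card hsub
        rw [hCard, Fin.card_Iic] at this
        omega
      have hwm : w m ≤ w ⟨k, hkn⟩ := hw (by rw [Fin.le_def]; simpa using hmk)
      calc ∑ i ∈ S, w i = ∑ i ∈ S.erase m, w i + w m := (Finset.sum_erase_add S w hmS).symm
        _ ≤ pref w k + w ⟨k, hkn⟩ := add_le_add (ih (S.erase m) hcard') hwm
        _ = pref w (k + 1) := (pref_succ w hkn).symm

/-- Abel-summation nonnegativity -/
lemma abel_core (s D : ℕ → ℝ) (m : ℕ) (hs : ∀ i, i + 1 < m → s (i + 1) ≤ s i)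
    (hD : ∀ k, k ≤ m → D k ≤ 0) (hD0 : D 0 = 0) (hDm : D m = 0) :
    ∑ i ∈ Finset.range m, s i * (D (i + 1) - D i) ≤ 0 := by
  rcases Nat.eq_zero_or_pos m with rfl | hm
  · simp
  have key : ∀ j, 1 ≤ j → j ≤ m → ∑ i ∈ Finset.range j, s i * (D (i + 1) - D i) ≤
      s (j - 1) * D j := by
    intro j
    induction j with
    | zero => omega
    | succ j ih =>
        intro _ hjm
        rcases Nat.eq_zero_or_pos j with rfl | hj
        · simp [hD0]
        have hih := ih hj (by omega)
        rw [Finset.sum_range_succ]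
        have hsj : s j ≤ s (j - 1) := by
          have := hs (j - 1) (by omega)
          have hj1 : j - 1 + 1 = j := by omega
          rwa [hj1] at this
        have hDj : D j ≤ 0 := hD j (by omega)
        have : s (j - 1) * D j + s j * (D (j + 1) - D j) ≤ s j * D (j + 1) := by nlinarith
        calc ∑ i ∈ Finset.range j, s i * (D (i + 1) - D i) + s j * (D (j + 1) - D j)
            ≤ s (j - 1) * D j + s j * (D (j + 1) - D j) := by linarith
          _ ≤ s j * D (j + 1) := this
          _ = s (j + 1 - 1) * D (j + 1) := by norm_num
  have := key m hm le_rfl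
  rw [hDm] at this
  simpa using this

/-- the convex function `g` in the divergence -/
noncomputable def gfun (α : ℝ) (s : ℝ) : ℝ := Real.exp (α * s) - α * s - 1

lemma gfun_nonneg (α s : ℝ) : 0 ≤ gfun α s := by
  have := Real.add_one_le_exp (α * s)
  unfold gfun
  linarith

lemma gfun_grad (α u v : ℝ) :
    gfun α u - gfun α v ≤ (α * Real.exp (α * u) - α) * (u - v) := by
  have h1 : α * (v - u) + 1 ≤ Real.exp (α * (v - u)) := Real.add_one_le_exp _
  have h2 : Real.exp (α * u) * (α * (v - u) + 1) ≤ Real.exp (α * u) * Real.exp (α * (v - u)) :=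
    mul_le_mul_of_nonneg_left h1 (Real.exp_pos _).le
  rw [← Real.exp_add] at h2
  have h3 : α * u + α * (v - u) = α * v := by ring
  rw [h3] at h2
  unfold gfun
  nlinarith
lemma gfun_grad_mono (α : ℝ) {u v : ℝ} (huv : u ≤ v) :
    α * Real.exp (α * u) - α ≤ α * Real.exp (α * v) - α := by
  rcases le_or_gt α 0 with hα | hα
  · have : Real.exp (α * v) ≤ Real.exp (α * u) :=
      Real.exp_le_exp.mpr (mul_le_mul_of_nonpos_left huv hα)
    nlinarith
  · have : Real.exp (α * u) ≤ Real.exp (α * v) :=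
      Real.exp_le_exp.mpr (mul_le_mul_of_nonneg_left huv hα.le)
    nlinarith

/-- Hardy–Littlewood–Pólya-type inequality for the function `gfun α` -/
lemma hlp (α : ℝ) {x y : Fin n → ℝ} (hx : Antitone x)
    (hpref : ∀ k, k ≤ n → pref x k ≤ pref y k) (htot : pref x n = pref y n) :
    ∑ i, gfun α (x i) ≤ ∑ i, gfun α (y i) := by
  classical
  set xx : ℕ → ℝ := fun i => if h : i < n then x ⟨i, h⟩ else 0 with hxx
  set s : ℕ → ℝ := fun i => α * Real.exp (α * xx i) - α with hs
  set D : ℕ → ℝ := fun k => pref x k - pref y k with hD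
  have habel : ∑ i ∈ Finset.range n, s i * (D (i + 1) - D i) ≤ 0 := by
    apply abel_core
    · intro i hi
      apply gfun_grad_mono
      have h1 : i < n := by omega
      have h2 : i + 1 < n := hi
      simp only [hxx, dif_pos h1, dif_pos h2]
      exact hx (by rw [Fin.le_def]; simp)
    · intro k hk
      show pref x k - pref y k ≤ 0
      have := hpref k hk
      linarith
    · simp [hD, pref_zero]
    · simp [hD, htot]
  have hterm : ∀ i : Fin n, gfun α (x i) - gfun α (y i) ≤ s (i : ℕ) * (D ((i : ℕ) + 1) - D (i : ℕ)) := by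
    intro i
    have hxx_i : xx (i : ℕ) = x i := by
      simp only [hxx, dif_pos i.isLt]
    have hDdiff : D ((i : ℕ) + 1) - D (i : ℕ) = x i - y i := by
      simp only [hD]
      rw [pref_succ x i.isLt, pref_succ y i.isLt]
      ring
    rw [hDdiff, hs]
    simp only [hxx_i]
    exact gfun_grad α (x i) (y i)
  have hsum : ∑ i : Fin n, (gfun α (x i) - gfun α (y i)) ≤
      ∑ i ∈ Finset.range n, s i * (D (i + 1) - D i) := by
    rw [← Fin.sum_univ_eq_sum_range (fun i => s i * (D (i + 1) - D i)) n]
    exact Finset.sum_le_sum (fun i _ => hterm i)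
  rw [Finset.sum_sub_distrib] at hsum
  linarith

lemma card_filter_lt {k : ℕ} (hk : k ≤ n) :
    (Finset.univ.filter (fun j : Fin n => (j : ℕ) < k)).card = k := by
  induction k with
  | zero =>
      rw [Finset.filter_false_of_mem (fun j _ => by omega)]
      simp
  | succ k ih =>
      have hkn : k < n := by omega
      rw [filter_succ_eq hkn, Finset.card_insert_of_notMem (by simp), ih (by omega)]


end ABLD

open ABLD in
/-- Bounds on the Alpha-Beta log-det divergence `D_{α,0}(A‖B)`, where
`Tr((BA⁻¹)^α)` is computed as `Tr((A^{-1/2} B A^{-1/2})^α)` (the two matrices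
are similar, hence have the same eigenvalues and trace). -/
theorem ab_logdet_divergence_bounds {n : ℕ} {A B : Matrix (Fin n) (Fin n) ℝ}
    (hA : A.PosDef) (hB : B.PosDef) (α : ℝ) (hα : α ≠ 0) :
    (1 / α ^ 2) *
          ∑ i, (eigDesc hB.1 i ^ α / eigDesc hA.1 i ^ α -
            Real.log (eigDesc hB.1 i ^ α / eigDesc hA.1 i ^ α) - 1) ≤
        (1 / α ^ 2) *
          (((mPow (mPow A (-(1 / 2)) * B * mPow A (-(1 / 2))) α).trace - (n : ℝ)) -
            α * Real.log (B * A⁻¹).det) ∧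
      (1 / α ^ 2) *
          (((mPow (mPow A (-(1 / 2)) * B * mPow A (-(1 / 2))) α).trace - (n : ℝ)) -
            α * Real.log (B * A⁻¹).det) ≤
        (1 / α ^ 2) *
          ∑ i, (eigDesc hB.1 i.rev ^ α / eigDesc hA.1 i ^ α -
            Real.log (eigDesc hB.1 i.rev ^ α / eigDesc hA.1 i ^ α) - 1) := by
  have haev := hA.eigenvalues_pos
  have hbev := hB.eigenvalues_pos
  -- the matrices P = A^{-1/2}, Q = A^{1/2}, M = A^{-1/2} B A^{-1/2}
  set pf : ℝ → ℝ := fun t => t ^ (-(1 / 2) : ℝ) with hpf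
  set qf : ℝ → ℝ := fun t => t ^ ((1 : ℝ) / 2) with hqf
  have hPdef : mPow A (-(1 / 2)) = hA.1.cfc pf := Matrix.IsHermitian.cfc_eq hA.1 pf
  set P : Matrix (Fin n) (Fin n) ℝ := hA.1.cfc pf with hP
  set Q : Matrix (Fin n) (Fin n) ℝ := hA.1.cfc qf with hQ
  have hPherm : P.IsHermitian := cfc_herm hA.1 pf
  have hQherm : Q.IsHermitian := cfc_herm hA.1 qf
  have hPpd : P.PosDef := cfc_posDef hA.1 pf (fun i => Real.rpow_pos_of_pos (haev i) _)
  set M : Matrix (Fin n) (Fin n) ℝ := P * B * P with hM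
  have hMdef : mPow A (-(1 / 2)) * B * mPow A (-(1 / 2)) = M := by rw [hPdef]
  have hMpd : M.PosDef := by
    have : M = P * B * Pᴴ := by rw [hM, hPherm.eq]
    rw [this]
    exact posDef_conj hB hPpd.isUnit
  -- algebraic identities
  have hQP : Q * P = 1 := by
    rw [hQ, hP, cfc_mul_cfc, ← cfc_const_one hA.1]
    exact cfc_congr' hA.1 (fun i => by
      rw [hqf, hpf]
      rw [← Real.rpow_add (haev i)]
      norm_num)
  have hPQ : P * Q = 1 := by
    rw [hQ, hP, cfc_mul_cfc, ← cfc_const_one hA.1]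
    exact cfc_congr' hA.1 (fun i => by
      rw [hqf, hpf]
      rw [← Real.rpow_add (haev i)]
      norm_num)
  have hQQ : Q * Q = A := by
    calc Q * Q = hA.1.cfc (fun t => qf t * qf t) := by rw [hQ, cfc_mul_cfc]
      _ = hA.1.cfc (fun t => t) := cfc_congr' hA.1 (fun i => by
          rw [hqf, ← Real.rpow_add (haev i)]
          norm_num [Real.rpow_one])
      _ = A := cfc_id' hA.1
  have hPP : P * P = A⁻¹ := by
    rw [hP, cfc_mul_cfc, inv_eq_cfc hA]
    exact cfc_congr' hA.1 (fun i => by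
      rw [hpf, ← Real.rpow_add (haev i)]
      norm_num [Real.rpow_neg_one])
  have hQMQ : B = Q * M * Q := by
    have e1 : Q * M * Q = (Q * P) * B * (P * Q) := by
      rw [hM]
      simp only [Matrix.mul_assoc]
    rw [e1, hQP, hPQ, Matrix.one_mul, Matrix.mul_one]
  -- eigenvalue tuples
  set a : Fin n → ℝ := eigDesc hA.1 with ha
  set b : Fin n → ℝ := eigDesc hB.1 with hb
  set μ : Fin n → ℝ := eigDesc hMpd.1 with hμ
  have hapos : ∀ i, 0 < a i := eigDesc_pos hA
  have hbpos : ∀ i, 0 < b i := eigDesc_pos hB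
  have hμpos : ∀ i, 0 < μ i := eigDesc_pos hMpd
  set u : Fin n → ℝ := fun i => Real.log (b i) - Real.log (a i) with hu
  set lμ : Fin n → ℝ := fun i => Real.log (μ i) with hlμ
  set y' : Fin n → ℝ := fun i => Real.log (b i) - Real.log (a i.rev) with hy'
  -- Lidskii instances
  have L1 : ∀ S : Finset (Fin n), ∑ i ∈ S, u i ≤
      ∑ j ∈ Finset.univ.filter (fun j : Fin n => (j : ℕ) < S.card), lμ j := by
    intro S
    exact lidskii hA hMpd hB hQherm hQQ hQMQ S
  have L2 : ∀ S : Finset (Fin n), ∑ i ∈ S, (lμ i + Real.log (a i.rev)) ≤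
      ∑ j ∈ Finset.univ.filter (fun j : Fin n => (j : ℕ) < S.card), Real.log (b j) := by
    intro S
    have h0 := lidskii hA.inv hB hMpd hPherm hPP rfl S
    have he : ∀ i, Real.log (eigDesc hMpd.1 i) - Real.log (eigDesc (hA.inv).1 i) =
        lμ i + Real.log (a i.rev) := by
      intro i
      rw [eigDesc_inv hA (hA.inv).1 i, Real.log_inv]
      ring
    rw [Finset.sum_congr rfl (fun i _ => he i)] at h0
    exact h0
  -- determinant identities
  have detM : M.det = A⁻¹.det * B.det := by
    calc M.det = P.det * B.det * P.det := by rw [hM, Matrix.det_mul, Matrix.det_mul]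
      _ = (P * P).det * B.det := by rw [Matrix.det_mul]; ring
      _ = A⁻¹.det * B.det := by rw [hPP]
  have detBA : (B * A⁻¹).det = M.det := by
    rw [Matrix.det_mul, detM]
    ring
  have hdetAinv : A⁻¹.det = A.det⁻¹ := by
    rw [Matrix.det_nonsing_inv, Ring.inverse_eq_inv']
  have hlogdet : Real.log (B * A⁻¹).det = ∑ i, lμ i := by
    rw [detBA, det_eq_prod_eigDesc hMpd.1, Real.log_prod (fun i _ => (hμpos i).ne')]
  have hsum_a : ∑ i : Fin n, Real.log (a i.rev) = ∑ i, Real.log (a i) := by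
    have := Equiv.sum_comp (Fin.revPerm) (fun i : Fin n => Real.log (a i))
    simpa using this
  have htot1 : ∑ i, u i = ∑ i, lμ i := by
    have e1 : ∑ i, lμ i = Real.log M.det := by
      rw [det_eq_prod_eigDesc hMpd.1, Real.log_prod (fun i _ => (hμpos i).ne')]
    have e2 : ∑ i, Real.log (a i) = Real.log A.det := by
      rw [det_eq_prod_eigDesc hA.1, Real.log_prod (fun i _ => (hapos i).ne')]
    have e3 : ∑ i, Real.log (b i) = Real.log B.det := by
      rw [det_eq_prod_eigDesc hB.1, Real.log_prod (fun i _ => (hbpos i).ne')]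
    have e4 : Real.log M.det = Real.log B.det - Real.log A.det := by
      rw [detM, hdetAinv, Real.log_mul (inv_ne_zero hA.det_pos.ne') hB.det_pos.ne',
        Real.log_inv]
      ring
    rw [e1, e4, Finset.sum_sub_distrib, e2, e3]
  -- HLP lower bound
  have hlow : ∑ i, gfun α (u i) ≤ ∑ i, gfun α (lμ i) := by
    have hstep : ∑ i, gfun α (sortDesc u i) ≤ ∑ i, gfun α (lμ i) := by
      apply hlp α (antitone_sortDesc u)
      · intro k hk
        have hpref_eq : pref (sortDesc u) k =
            ∑ i ∈ (Finset.univ.filter (fun j : Fin n => (j : ℕ) < k)).image (sortPermD u), u i := by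
          rw [Finset.sum_image (fun x _ y _ h => (sortPermD u).injective h)]
          unfold pref
          exact Finset.sum_congr rfl (fun j _ => sortDesc_apply u j)
        rw [hpref_eq]
        have hcard : ((Finset.univ.filter (fun j : Fin n => (j : ℕ) < k)).image
            (sortPermD u)).card = k := by
          rw [Finset.card_image_of_injective _ (sortPermD u).injective, card_filter_lt hk]
        have := L1 ((Finset.univ.filter (fun j : Fin n => (j : ℕ) < k)).image (sortPermD u))
        rw [hcard] at this
        exact this
      · rw [pref_top, pref_top]
        rw [show ∑ j, sortDesc u j = ∑ j, u j from sum_comp_sortDesc u (fun t => t)]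
        exact htot1
    calc ∑ i, gfun α (u i) = ∑ i, gfun α (sortDesc u i) := (sum_comp_sortDesc u (gfun α)).symm
      _ ≤ _ := hstep
  -- HLP upper bound
  have hμanti : Antitone lμ := by
    intro i j hij
    exact Real.log_le_log (hμpos j) (antitone_sortDesc hMpd.1.eigenvalues hij)
  have hhigh : ∑ i, gfun α (lμ i) ≤ ∑ i, gfun α (y' i) := by
    apply hlp α hμanti
    · intro k hk
      have hS := L2 (Finset.univ.filter (fun j : Fin n => (j : ℕ) < k))
      rw [card_filter_lt hk] at hS
      unfold pref
      rw [Finset.sum_add_distrib] at hS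
      have : ∑ j ∈ Finset.univ.filter (fun j : Fin n => (j : ℕ) < k), y' j =
          ∑ j ∈ Finset.univ.filter (fun j : Fin n => (j : ℕ) < k), Real.log (b j) -
          ∑ j ∈ Finset.univ.filter (fun j : Fin n => (j : ℕ) < k), Real.log (a j.rev) := by
        rw [← Finset.sum_sub_distrib]
      rw [this]
      linarith
    · rw [pref_top, pref_top]
      have : ∑ i, y' i = ∑ i, Real.log (b i) - ∑ i : Fin n, Real.log (a i.rev) := by
        rw [← Finset.sum_sub_distrib]
      rw [this, hsum_a, ← htot1]
      rw [← Finset.sum_sub_distrib]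
  -- translate the three quantities
  have hterm_l : ∀ i : Fin n, b i ^ α / a i ^ α - Real.log (b i ^ α / a i ^ α) - 1 =
      gfun α (u i) := by
    intro i
    have e1 : b i ^ α / a i ^ α = Real.exp (α * u i) := by
      rw [Real.rpow_def_of_pos (hbpos i), Real.rpow_def_of_pos (hapos i), ← Real.exp_sub]
      congr 1
      rw [hu]
      ring
    rw [e1, Real.log_exp, gfun]
  have hterm_r : ∀ i : Fin n, b i.rev ^ α / a i ^ α - Real.log (b i.rev ^ α / a i ^ α) - 1 =
      gfun α (y' i.rev) := by
    intro i
    have e1 : b i.rev ^ α / a i ^ α = Real.exp (α * y' i.rev) := by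
      rw [Real.rpow_def_of_pos (hbpos i.rev), Real.rpow_def_of_pos (hapos i), ← Real.exp_sub]
      congr 1
      rw [hy']
      simp only [Fin.rev_rev]
      ring
    rw [e1, Real.log_exp, gfun]
  have hsum_r : ∑ i, gfun α (y' i) = ∑ i : Fin n, gfun α (y' i.rev) := by
    have := Equiv.sum_comp (Fin.revPerm) (fun i : Fin n => gfun α (y' i))
    simpa using this.symm
  have hmid : (mPow (mPow A (-(1 / 2)) * B * mPow A (-(1 / 2))) α).trace - (n : ℝ) -
      α * Real.log (B * A⁻¹).det = ∑ i, gfun α (lμ i) := by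
    have e1 : mPow (mPow A (-(1 / 2)) * B * mPow A (-(1 / 2))) α = hMpd.1.cfc (fun t => t ^ α) := by
      rw [hMdef]
      exact Matrix.IsHermitian.cfc_eq hMpd.1 _
    rw [e1, cfc_trace_eigDesc, hlogdet]
    have e2 : ∀ i : Fin n, (eigDesc hMpd.1 i) ^ α = Real.exp (α * lμ i) := by
      intro i
      rw [Real.rpow_def_of_pos (hμpos i)]
      congr 1
      ring
    rw [Finset.sum_congr rfl (fun i _ => e2 i)]
    rw [show (n : ℝ) = ∑ _i : Fin n, (1 : ℝ) by simp, Finset.mul_sum]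
    rw [← Finset.sum_sub_distrib, ← Finset.sum_sub_distrib]
    exact Finset.sum_congr rfl (fun i _ => by rw [gfun]; ring)
  have hα2 : (0 : ℝ) ≤ 1 / α ^ 2 := by positivity
  constructor
  · apply mul_le_mul_of_nonneg_left _ hα2
    rw [hmid, Finset.sum_congr rfl (fun i _ => hterm_l i)]
    exact hlow
  · apply mul_le_mul_of_nonneg_left _ hα2
    rw [hmid, Finset.sum_congr rfl (fun i _ => hterm_r i)]
    exact le_trans hhigh (le_of_eq hsum_r)
end
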